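/- arXiv:1307.7236 — 3 statements merged into one kernel-verified Lean document; each statement's English description precedes it below -/
import Mathlib

section
/- Let $R$ be a simply laced root system with $W$-invariant inner product $(\cdot,\cdot)$ normalized so that $(\alpha,\alpha)=2$ for all roots. Let $\varpi_1, \varpi_2$ be minuscule fundamental weights (i.e. $(\varpi_i, \alpha^\vee) \in \{-1,0,1\}$ for all roots $\alpha$), and define $d(\lambda_1,\lambda_2) = (\varpi_1,\varpi_2) - (\lambda_1,\lambda_2)$ for $\lambda_i \in W\cdot\varpi_i$. Then $d(\lambda_1,\lambda_2) \geq 0$, and $d(\lambda_1,\lambda_2) = 0$ if and only if $\lambda_1$ and $\lambda_2$ lie in a common (closed) Weyl chamber. -/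
open scoped RealInnerProductSpace

variable {E : Type*} [NormedAddCommGroup E] [InnerProductSpace ℝ E]

/-- The reflection in the root `α` (with the normalization `(α, α) = 2`, so that the coroot
of `α` is identified with `α`): `s_α(x) = x - (x, α) α`. -/
noncomputable def rootReflection (α x : E) : E := x - ⟪x, α⟫ • α

/-- The Weyl group orbit `W · ϖ` of a weight `ϖ`, where `W` is generated by the reflections
in the roots belonging to `R`. -/
def weylOrbit (R : Set E) (ϖ : E) : Set E :=
  {lam : E | Relation.ReflTransGen (fun μ ν => ∃ α ∈ R, ν = rootReflection α μ) ϖ lam}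

namespace S5

lemma ir_left (α x y : E) : ⟪rootReflection α x, y⟫ = ⟪x, y⟫ - ⟪x, α⟫ * ⟪α, y⟫ := by
  simp [rootReflection, inner_sub_left, real_inner_smul_left]

lemma ir_right (α x y : E) : ⟪y, rootReflection α x⟫ = ⟪y, x⟫ - ⟪x, α⟫ * ⟪y, α⟫ := by
  simp [rootReflection, inner_sub_right, real_inner_smul_right]

lemma ir_adj (α x y : E) : ⟪rootReflection α x, y⟫ = ⟪x, rootReflection α y⟫ := by
  rw [ir_left, ir_right, real_inner_comm α y]; ring

lemma ir_self {α : E} (h2 : ⟪α, α⟫ = (2:ℝ)) (x : E) :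
    ⟪rootReflection α x, α⟫ = -⟪x, α⟫ := by rw [ir_left, h2]; ring

lemma rr_eq_sub {α x : E} (h : ⟪x, α⟫ = 1) : rootReflection α x = x - α := by
  rw [rootReflection, h, one_smul]

lemma rr_eq_add {α x : E} (h : ⟪x, α⟫ = -1) : rootReflection α x = x + α := by
  rw [rootReflection, h]; simp

lemma rr_invol {α : E} (h2 : ⟪α, α⟫ = (2:ℝ)) (x : E) :
    rootReflection α (rootReflection α x) = x := by
  simp only [rootReflection, inner_sub_left, real_inner_smul_left, h2]
  have h : ⟪x,α⟫ - ⟪x,α⟫ * 2 = -⟪x,α⟫ := by ring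
  rw [h, neg_smul]
  abel

lemma ir_both {α : E} (h2 : ⟪α, α⟫ = (2:ℝ)) (x y : E) :
    ⟪rootReflection α x, rootReflection α y⟫ = ⟪x, y⟫ := by
  rw [ir_adj, rr_invol h2]

lemma rr_neg (α x : E) : rootReflection (-α) x = rootReflection α x := by
  simp [rootReflection]

/-- `μ` can be transformed into `ν` by `n` reflections in roots of `R`. -/
def reachN (R : Set E) : ℕ → E → E → Prop
  | 0, μ, ν => μ = ν
  | (n+1), μ, ν => ∃ α ∈ R, reachN R n (rootReflection α μ) ν

/-- All pairings of `x` with roots lie in `{-1, 0, 1}` (minuscule condition). -/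
def Mns (R : Set E) (x : E) : Prop := ∀ α ∈ R, ⟪x, α⟫ = -1 ∨ ⟪x, α⟫ = 0 ∨ ⟪x, α⟫ = 1

section core
variable {R : Set E}

lemma reach_snoc {n : ℕ} {μ ν α : E} (hα : α ∈ R) (h : reachN R n μ ν) :
    reachN R (n+1) μ (rootReflection α ν) := by
  induction n generalizing μ with
  | zero => exact ⟨α, hα, by cases h; rfl⟩
  | succ n ih => obtain ⟨β, hβ, h⟩ := h; exact ⟨β, hβ, ih h⟩

lemma reach_symm (hlen : ∀ α ∈ R, ⟪α, α⟫ = (2:ℝ)) {n : ℕ} {μ ν : E}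
    (h : reachN R n μ ν) : reachN R n ν μ := by
  induction n generalizing μ with
  | zero => exact h.symm
  | succ n ih =>
    obtain ⟨α, hα, h⟩ := h
    have := reach_snoc hα (ih h)
    rwa [rr_invol (hlen α hα)] at this

lemma Mns_step {μ α : E} (hrefl : ∀ α ∈ R, ∀ β ∈ R, rootReflection α β ∈ R)
    (hM : Mns R μ) (hα : α ∈ R) : Mns R (rootReflection α μ) := by
  intro β hβ
  rw [ir_adj]
  exact hM _ (hrefl α hα β hβ)

lemma reach_M (hrefl : ∀ α ∈ R, ∀ β ∈ R, rootReflection α β ∈ R) {n : ℕ} {μ ν : E}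
    (h : reachN R n μ ν) (hM : Mns R μ) : Mns R ν := by
  induction n generalizing μ with
  | zero => rwa [← h]
  | succ n ih => obtain ⟨α, hα, h⟩ := h; exact ih h (Mns_step hrefl hM hα)

lemma reach_normsq (hlen : ∀ α ∈ R, ⟪α, α⟫ = (2:ℝ)) {n : ℕ} {μ ν : E}
    (h : reachN R n μ ν) : ⟪μ, μ⟫ = ⟪ν, ν⟫ := by
  induction n generalizing μ with
  | zero => rw [h]
  | succ n ih =>
    obtain ⟨α, hα, h⟩ := h
    rw [← ir_both (hlen α hα) μ μ]; exact ih h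

lemma orbit_reach {ϖ lam : E} (h : lam ∈ weylOrbit R ϖ) : ∃ n, reachN R n ϖ lam := by
  simp only [weylOrbit, Set.mem_setOf_eq] at h
  induction h with
  | refl => exact ⟨0, rfl⟩
  | tail _ hbc ih =>
    obtain ⟨α, hα, rfl⟩ := hbc
    obtain ⟨n, hn⟩ := ih
    exact ⟨n+1, reach_snoc hα hn⟩

lemma reach_orbit {ϖ μ ν : E} {n : ℕ} (h : reachN R n μ ν) (hμ : μ ∈ weylOrbit R ϖ) :
    ν ∈ weylOrbit R ϖ := by
  induction n generalizing μ with
  | zero => rwa [← h]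
  | succ n ih =>
    obtain ⟨α, hα, h⟩ := h
    exact ih h (Relation.ReflTransGen.tail hμ ⟨α, hα, rfl⟩)

variable (hlen : ∀ α ∈ R, ⟪α, α⟫ = (2:ℝ)) (hneg : ∀ α ∈ R, -α ∈ R)
  (hrefl : ∀ α ∈ R, ∀ β ∈ R, rootReflection α β ∈ R)

include hlen hneg hrefl in
/-- Chain shortening: if `τ ⇝ ν` in `n` steps, `(τ,α) = -1`, `(ν,α) = 1`, then
`s_α τ ⇝ ν` in at most `n` steps. -/
lemma shorten {ν α : E} (hα : α ∈ R) (hνα : ⟪ν, α⟫ = 1) :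
    ∀ n (τ : E), reachN R n τ ν → Mns R τ → ⟪τ, α⟫ = -1 →
      ∃ m, m ≤ n ∧ reachN R m (rootReflection α τ) ν := by
  intro n
  induction n with
  | zero =>
    intro τ h hM hτα
    exfalso
    have he : τ = ν := h
    rw [he, hνα] at hτα; norm_num at hτα
  | succ n ih =>
    rintro τ ⟨β₀, hβ₀, h₀⟩ hM hτα
    have main : ∀ β, β ∈ R → ⟪τ, β⟫ = 1 → reachN R n (rootReflection β τ) ν →
        ∃ m, m ≤ n + 1 ∧ reachN R m (rootReflection α τ) ν := by
      intro β hβ hb h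
      set τ' := rootReflection β τ with hτ'
      have hMτ' : Mns R τ' := Mns_step hrefl hM hβ
      have hτ'α : ⟪τ', α⟫ = -1 - ⟪β, α⟫ := by rw [hτ', ir_left, hτα, hb]; ring
      rcases hMτ' α hα with ha | ha | ha
      · -- ⟪β,α⟫ = 0 : commute the two reflections
        have hc : ⟪β, α⟫ = 0 := by rw [hτ'α] at ha; linarith
        obtain ⟨m, hm, hr⟩ := ih τ' h hMτ' (by rw [hτ'α, hc]; ring)
        refine ⟨m + 1, by omega, ⟨β, hβ, ?_⟩⟩
        have e1 : rootReflection β (rootReflection α τ) = rootReflection α τ' := by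
          rw [rr_eq_add hτα]
          have h1 : ⟪τ + α, β⟫ = 1 := by
            rw [inner_add_left, hb, real_inner_comm β α, hc]; ring
          rw [rr_eq_sub h1, rr_eq_add (show ⟪τ', α⟫ = -1 by rw [hτ'α, hc]; ring), hτ',
            rr_eq_sub hb]
          abel
        rwa [e1]
      · -- ⟪β,α⟫ = -1 : use the root γ = s_α β
        have hc : ⟪β, α⟫ = -1 := by rw [hτ'α] at ha; linarith
        refine ⟨n + 1, le_refl _, ⟨rootReflection α β, hrefl α hα β hβ, ?_⟩⟩
        have h1 : ⟪rootReflection α τ, rootReflection α β⟫ = 1 := by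
          rw [ir_both (hlen α hα), hb]
        have e2 : rootReflection (rootReflection α β) (rootReflection α τ) = τ' := by
          rw [rr_eq_sub h1, rr_eq_add hτα, rr_eq_add hc, hτ', rr_eq_sub hb]
          abel
        rwa [e2]
      · -- ⟪β,α⟫ = -2 : β = -α
        have hc : ⟪β, α⟫ = -2 := by rw [hτ'α] at ha; linarith
        have hz : ⟪β + α, β + α⟫ = (0:ℝ) := by
          rw [inner_add_left, inner_add_right, inner_add_right, hlen β hβ, hlen α hα,
            real_inner_comm β α, hc]; ring
        have hba : β = -α := eq_neg_of_add_eq_zero_left (inner_self_eq_zero.mp hz)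
        rw [hτ', hba, rr_neg] at h
        exact ⟨n, by omega, h⟩
    rcases hM β₀ hβ₀ with hb | hb | hb
    · exact main (-β₀) (hneg β₀ hβ₀) (by rw [inner_neg_right, hb]; norm_num)
        (by rwa [rr_neg])
    · have e : rootReflection β₀ τ = τ := by rw [rootReflection, hb, zero_smul, sub_zero]
      rw [e] at h₀
      obtain ⟨m, hm, hr⟩ := ih τ h₀ hM hτα
      exact ⟨m, by omega, hr⟩
    · exact main β₀ hβ₀ hb h₀

include hlen hneg hrefl in
/-- Two elements of a minuscule orbit lying in a common closed chamber are equal. -/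
lemma good_eq : ∀ k n (μ ν : E), n ≤ k → reachN R n μ ν → Mns R μ →
    (∀ β ∈ R, 0 ≤ ⟪μ, β⟫ * ⟪ν, β⟫) → μ = ν := by
  intro k
  induction k with
  | zero =>
    intro n μ ν hn h _ _
    interval_cases n
    exact h
  | succ k ih =>
    intro n μ ν hn h₀ hM hgood
    match n, h₀ with
    | 0, h₀ => exact h₀
    | (m+1), h₀ =>
      have hm : m ≤ k := by omega
      have hMν : Mns R ν := reach_M hrefl h₀ hM
      obtain ⟨α₀, hα₀, h⟩ := h₀
      have main : ∀ α, α ∈ R → ⟪μ, α⟫ = 1 → reachN R m (rootReflection α μ) ν → μ = ν := by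
        intro α hα hμα h
        set τ := rootReflection α μ with hτdef
        have hτα : ⟪τ, α⟫ = -1 := by rw [hτdef, ir_self (hlen α hα), hμα]
        have hMτ : Mns R τ := Mns_step hrefl hM hα
        rcases hMν α hα with hνα | hνα | hνα
        · -- (ν,α) = -1 contradicts goodness
          exfalso
          have := hgood α hα
          rw [hμα, hνα] at this; norm_num at this
        · -- (ν,α) = 0 : analyse a separating root for (τ,ν)
          by_cases hg : ∀ β ∈ R, 0 ≤ ⟪τ, β⟫ * ⟪ν, β⟫
          · exfalso
            have hτν : τ = ν := ih m τ ν hm h hMτ hg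
            rw [hτν, hνα] at hτα; norm_num at hτα
          · push_neg at hg
            obtain ⟨β₀, hβ₀, hbad⟩ := hg
            have key : ∃ β ∈ R, ⟪τ, β⟫ = -1 ∧ ⟪ν, β⟫ = 1 := by
              rcases hMτ β₀ hβ₀ with h1 | h1 | h1
              · rcases hMν β₀ hβ₀ with h2 | h2 | h2
                · rw [h1, h2] at hbad; norm_num at hbad
                · rw [h1, h2] at hbad; norm_num at hbad
                · exact ⟨β₀, hβ₀, h1, h2⟩
              · rw [h1] at hbad; norm_num at hbad
              · rcases hMν β₀ hβ₀ with h2 | h2 | h2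
                · exact ⟨-β₀, hneg β₀ hβ₀, by simp [inner_neg_right, h1],
                    by simp [inner_neg_right, h2]⟩
                · rw [h1, h2] at hbad; norm_num at hbad
                · rw [h1, h2] at hbad; norm_num at hbad
            obtain ⟨β, hβ, hτβ, hνβ⟩ := key
            have hμβ : ⟪μ, β⟫ = -1 + ⟪α, β⟫ := by
              have : μ = rootReflection α τ := (rr_invol (hlen α hα) μ).symm
              rw [this, ir_left, hτβ, hτα]; ring
            exfalso
            rcases hM β hβ with h3 | h3 | h3
            · -- (μ,β) = -1 contradicts goodness at β
              have := hgood β hβ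
              rw [h3, hνβ] at this; norm_num at this
            · -- (μ,β) = 0 : the root γ = β - α separates
              have hc : ⟪α, β⟫ = 1 := by rw [h3] at hμβ; linarith
              have hγ : rootReflection α β ∈ R := hrefl α hα β hβ
              have hμγ : ⟪μ, rootReflection α β⟫ = -1 := by
                rw [ir_right, h3, hμα, real_inner_comm α β, hc]; ring
              have hνγ : ⟪ν, rootReflection α β⟫ = 1 := by
                rw [ir_right, hνβ, hνα, real_inner_comm α β, hc]; ring
              have := hgood _ hγ
              rw [hμγ, hνγ] at this; norm_num at this
            · -- (μ,β) = 1 : then β = α, contradiction with (ν,α)=0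
              have hc : ⟪α, β⟫ = 2 := by rw [h3] at hμβ; linarith
              have hz : ⟪α - β, α - β⟫ = (0:ℝ) := by
                rw [inner_sub_left, inner_sub_right, inner_sub_right, hlen α hα, hlen β hβ,
                  real_inner_comm α β, hc]; ring
              have hab : α = β := sub_eq_zero.mp (inner_self_eq_zero.mp hz)
              rw [← hab, hνα] at hνβ; norm_num at hνβ
        · -- (ν,α) = 1 : shorten the chain
          obtain ⟨m', hm', hr⟩ := shorten hlen hneg hrefl hα hνα m τ h hMτ hτα
          rw [hτdef, rr_invol (hlen α hα)] at hr
          exact ih m' μ ν (by omega) hr hM hgood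
      rcases hM α₀ hα₀ with he | he | he
      · exact main (-α₀) (hneg α₀ hα₀) (by rw [inner_neg_right, he]; norm_num)
          (by rwa [rr_neg])
      · have e : rootReflection α₀ μ = μ := by rw [rootReflection, he, zero_smul, sub_zero]
        rw [e] at h
        exact ih m μ ν hm h hM hgood
      · exact main α₀ hα₀ he h

include hlen hneg hrefl in
/-- If `ν` is in a common chamber with `x`, it maximizes `⟪x,·⟫` over its orbit. -/
lemma crux {x ν : E} (hMν : Mns R ν)
    (hgx : ∀ α ∈ R, 0 ≤ ⟪x, α⟫ * ⟪ν, α⟫) :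
    ∀ (M : ℕ) (μ : E) (n : ℕ), reachN R n μ ν → ⟪ν, ν⟫ - ⟪μ, ν⟫ ≤ M → ⟪x, μ⟫ ≤ ⟪x, ν⟫ := by
  intro M
  induction M with
  | zero =>
    intro μ n h hgap
    have hnn : ⟪μ, μ⟫ = ⟪ν, ν⟫ := reach_normsq hlen h
    have hz : ⟪μ - ν, μ - ν⟫ ≤ (0:ℝ) := by
      rw [inner_sub_left, inner_sub_right, inner_sub_right, hnn, real_inner_comm μ ν]
      push_cast at hgap
      linarith
    have : μ - ν = 0 := inner_self_eq_zero.mp (le_antisymm hz real_inner_self_nonneg)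
    rw [sub_eq_zero.mp this]
  | succ M ih =>
    intro μ n h hgap
    by_cases hμν : μ = ν
    · rw [hμν]
    · have hMμ : Mns R μ := reach_M hrefl (reach_symm hlen h) hMν
      have hbad : ¬ (∀ β ∈ R, 0 ≤ ⟪μ, β⟫ * ⟪ν, β⟫) := fun hg =>
        hμν (good_eq hlen hneg hrefl n n μ ν (le_refl n) h hMμ hg)
      push_neg at hbad
      obtain ⟨β, hβ, hb⟩ := hbad
      have key : ⟪μ, β⟫ * ⟪ν, β⟫ = -1 := by
        rcases hMμ β hβ with h1 | h1 | h1 <;> rcases hMν β hβ with h2 | h2 | h2 <;>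
          rw [h1, h2] at hb ⊢ <;> norm_num at hb <;> norm_num
      have hstep : reachN R (n+1) (rootReflection β μ) ν :=
        ⟨β, hβ, by rwa [rr_invol (hlen β hβ)]⟩
      have hinner : ⟪rootReflection β μ, ν⟫ = ⟪μ, ν⟫ + 1 := by
        rw [ir_left]
        have : ⟪μ, β⟫ * ⟪β, ν⟫ = -1 := by rw [real_inner_comm ν β]; exact key
        linarith
      have hgap' : ⟪ν, ν⟫ - ⟪rootReflection β μ, ν⟫ ≤ M := by
        rw [hinner]; push_cast at hgap ⊢; linarith
      have hle : ⟪x, rootReflection β μ⟫ ≤ ⟪x, ν⟫ := ih (rootReflection β μ) (n+1) hstep hgap'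
      have hxi : ⟪x, rootReflection β μ⟫ = ⟪x, μ⟫ - ⟪μ, β⟫ * ⟪x, β⟫ := ir_right β μ x
      have hgood := hgx β hβ
      rcases hMμ β hβ with h1 | h1 | h1 <;> rcases hMν β hβ with h2 | h2 | h2 <;>
        rw [h1, h2] at key <;> norm_num at key <;> rw [h1] at hxi <;> rw [h2] at hgood <;>
        nlinarith [hle, hxi, hgood]

include hlen hneg hrefl in
lemma crux' {x ν : E} (hMν : Mns R ν) (hgx : ∀ α ∈ R, 0 ≤ ⟪x, α⟫ * ⟪ν, α⟫)
    {μ : E} {n : ℕ} (h : reachN R n μ ν) : ⟪x, μ⟫ ≤ ⟪x, ν⟫ :=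
  crux hlen hneg hrefl hMν hgx ⌈⟪ν, ν⟫ - ⟪μ, ν⟫⌉₊ μ n h (Nat.le_ceil _)

include hlen hrefl in
/-- Transport a pair `(lam₁, y)` to a pair `(ϖ₁, y')` with the same inner product,
preserving the common-chamber property. -/
lemma transport1 {ϖ₁ ϖ₂ lam₁ : E} (h : lam₁ ∈ weylOrbit R ϖ₁) :
    ∀ y : E, (∃ n, reachN R n ϖ₂ y) →
      ∃ y', (∃ n', reachN R n' ϖ₂ y') ∧ ⟪lam₁, y⟫ = ⟪ϖ₁, y'⟫ ∧
        ((∀ α ∈ R, 0 ≤ ⟪lam₁, α⟫ * ⟪y, α⟫) → (∀ α ∈ R, 0 ≤ ⟪ϖ₁, α⟫ * ⟪y', α⟫)) := by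
  simp only [weylOrbit, Set.mem_setOf_eq] at h
  induction h with
  | refl => exact fun y hy => ⟨y, hy, rfl, fun hg => hg⟩
  | tail _ hbc ih =>
    rename_i b c _
    obtain ⟨α, hα, rfl⟩ := hbc
    intro y hy
    obtain ⟨n, hn⟩ := hy
    obtain ⟨y', hy', heq, hgood⟩ := ih (rootReflection α y) ⟨n+1, reach_snoc hα hn⟩
    refine ⟨y', hy', ?_, ?_⟩
    · rw [ir_adj, heq]
    · intro hg
      refine hgood ?_
      intro β hβ
      have e1 : ⟪b, β⟫ = ⟪rootReflection α b, rootReflection α β⟫ :=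
        (ir_both (hlen α hα) b β).symm
      have e2 : ⟪rootReflection α y, β⟫ = ⟪y, rootReflection α β⟫ := ir_adj α y β
      rw [e2]
      calc (0:ℝ) ≤ ⟪rootReflection α b, rootReflection α β⟫ * ⟪y, rootReflection α β⟫ :=
            hg _ (hrefl α hα β hβ)
        _ = ⟪b, β⟫ * ⟪y, rootReflection α β⟫ := by rw [e1]

include hlen in
/-- Transport the pair `(ϖ₁, ϖ₂)` along the chain `ϖ₂ ⇝ lam₂`. -/
lemma transport2 {ϖ₁ ϖ₂ lam₂ : E} (h : lam₂ ∈ weylOrbit R ϖ₂) :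
    ∃ μ₀ n, reachN R n μ₀ ϖ₁ ∧ ⟪μ₀, lam₂⟫ = ⟪ϖ₁, ϖ₂⟫ := by
  simp only [weylOrbit, Set.mem_setOf_eq] at h
  induction h with
  | refl => exact ⟨ϖ₁, 0, rfl, rfl⟩
  | tail _ hbc ih =>
    obtain ⟨α, hα, rfl⟩ := hbc
    obtain ⟨μ₀, n, hr, hi⟩ := ih
    refine ⟨rootReflection α μ₀, n+1, ⟨α, hα, ?_⟩, ?_⟩
    · rwa [rr_invol (hlen α hα)]
    · rw [ir_both (hlen α hα), hi]

end core

end S5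

/-- Let `R` be a simply laced root system (all roots of squared length `2`)
with positive roots `Rpos`, let `ϖ₁, ϖ₂` be minuscule fundamental weights (dominant, and
pairing with every root in `{-1,0,1}`), and for `λᵢ ∈ W·ϖᵢ` define
`d(λ₁,λ₂) = (ϖ₁,ϖ₂) - (λ₁,λ₂)`.  Then `d(λ₁,λ₂) ≥ 0`, and `d(λ₁,λ₂) = 0` if and only if
`λ₁` and `λ₂` lie in a common closed Weyl chamber, i.e. there is no root `α` with
`(λ₁,α)(λ₂,α) < 0`. -/
theorem statement5 (R Rpos : Set E) (ϖ₁ ϖ₂ lam₁ lam₂ : E)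
    (hpos : R = Rpos ∪ (-Rpos))
    (hlen : ∀ α ∈ R, ⟪α, α⟫ = 2)
    (hneg : ∀ α ∈ R, -α ∈ R)
    (hrefl : ∀ α ∈ R, ∀ β ∈ R, rootReflection α β ∈ R)
    (hdom₁ : ∀ α ∈ Rpos, 0 ≤ ⟪ϖ₁, α⟫) (hdom₂ : ∀ α ∈ Rpos, 0 ≤ ⟪ϖ₂, α⟫)
    (hmin₁ : ∀ α ∈ R, ⟪ϖ₁, α⟫ ∈ ({-1, 0, 1} : Set ℝ))
    (hmin₂ : ∀ α ∈ R, ⟪ϖ₂, α⟫ ∈ ({-1, 0, 1} : Set ℝ))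
    (hlam₁ : lam₁ ∈ weylOrbit R ϖ₁) (hlam₂ : lam₂ ∈ weylOrbit R ϖ₂) :
    0 ≤ ⟪ϖ₁, ϖ₂⟫ - ⟪lam₁, lam₂⟫ ∧
      (⟪ϖ₁, ϖ₂⟫ - ⟪lam₁, lam₂⟫ = 0 ↔ ∀ α ∈ R, 0 ≤ ⟪lam₁, α⟫ * ⟪lam₂, α⟫) := by
  classical
  have hMp1 : S5.Mns R ϖ₁ := by
    intro α hα
    have := hmin₁ α hα
    simpa [Set.mem_insert_iff, Set.mem_singleton_iff] using this
  have hMp2 : S5.Mns R ϖ₂ := by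
    intro α hα
    have := hmin₂ α hα
    simpa [Set.mem_insert_iff, Set.mem_singleton_iff] using this
  have hgood12 : ∀ α ∈ R, 0 ≤ ⟪ϖ₁, α⟫ * ⟪ϖ₂, α⟫ := by
    intro α hα
    rw [hpos] at hα
    rcases hα with h | h
    · exact mul_nonneg (hdom₁ α h) (hdom₂ α h)
    · have h' : -α ∈ Rpos := Set.mem_neg.mp h
      have d1 := hdom₁ _ h'
      have d2 := hdom₂ _ h'
      rw [inner_neg_right] at d1 d2
      nlinarith
  obtain ⟨n₁, hr₁⟩ := S5.orbit_reach hlam₁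
  obtain ⟨n₂, hr₂⟩ := S5.orbit_reach hlam₂
  have hMl1 : S5.Mns R lam₁ := S5.reach_M hrefl hr₁ hMp1
  have hMl2 : S5.Mns R lam₂ := S5.reach_M hrefl hr₂ hMp2
  -- Fact 1 : the upper bound, for any element of the orbit of ϖ₁
  have fact1 : ∀ l₁, l₁ ∈ weylOrbit R ϖ₁ → ⟪l₁, lam₂⟫ ≤ ⟪ϖ₁, ϖ₂⟫ := by
    intro l₁ hl₁
    obtain ⟨y', ⟨n', hy'⟩, heq, -⟩ := S5.transport1 hlen hrefl hl₁ lam₂ ⟨n₂, hr₂⟩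
    rw [heq]
    exact S5.crux' hlen hneg hrefl hMp2 hgood12 (S5.reach_symm hlen hy')
  -- Fact 2 : common chamber implies the lower bound
  have fact2 : (∀ α ∈ R, 0 ≤ ⟪lam₁, α⟫ * ⟪lam₂, α⟫) → ⟪ϖ₁, ϖ₂⟫ ≤ ⟪lam₁, lam₂⟫ := by
    intro hg
    obtain ⟨y', ⟨n', hy'⟩, heq, htrans⟩ := S5.transport1 hlen hrefl hlam₁ lam₂ ⟨n₂, hr₂⟩
    have hgood' : ∀ α ∈ R, 0 ≤ ⟪ϖ₁, α⟫ * ⟪y', α⟫ := htrans hg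
    have hy'orb : y' ∈ weylOrbit R ϖ₂ := S5.reach_orbit hy' Relation.ReflTransGen.refl
    obtain ⟨μ₀, n₀, hr₀, hi₀⟩ := S5.transport2 hlen (ϖ₁ := ϖ₁) hy'orb
    have hgood'' : ∀ α ∈ R, 0 ≤ ⟪y', α⟫ * ⟪ϖ₁, α⟫ := by
      intro α hα
      have := hgood' α hα
      linarith [mul_comm (⟪ϖ₁, α⟫ : ℝ) ⟪y', α⟫]
    have hle : ⟪y', μ₀⟫ ≤ ⟪y', ϖ₁⟫ := S5.crux' hlen hneg hrefl hMp1 hgood'' hr₀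
    calc ⟪ϖ₁, ϖ₂⟫ = ⟪μ₀, y'⟫ := hi₀.symm
      _ = ⟪y', μ₀⟫ := (real_inner_comm μ₀ y').symm
      _ ≤ ⟪y', ϖ₁⟫ := hle
      _ = ⟪ϖ₁, y'⟫ := (real_inner_comm y' ϖ₁).symm
      _ = ⟪lam₁, lam₂⟫ := heq.symm
  -- Fact 3 : equality implies common chamber
  have fact3 : ⟪ϖ₁, ϖ₂⟫ - ⟪lam₁, lam₂⟫ = 0 → ∀ α ∈ R, 0 ≤ ⟪lam₁, α⟫ * ⟪lam₂, α⟫ := by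
    intro heq
    by_contra hbad
    push_neg at hbad
    obtain ⟨β, hβ, hb⟩ := hbad
    have key : ⟪lam₁, β⟫ * ⟪lam₂, β⟫ = -1 := by
      rcases hMl1 β hβ with h1 | h1 | h1 <;> rcases hMl2 β hβ with h2 | h2 | h2 <;>
        rw [h1, h2] at hb ⊢ <;> norm_num at hb <;> norm_num
    have hl₁' : rootReflection β lam₁ ∈ weylOrbit R ϖ₁ :=
      Relation.ReflTransGen.tail hlam₁ ⟨β, hβ, rfl⟩
    have hineq := fact1 _ hl₁'
    rw [S5.ir_left] at hineq
    have hkey' : ⟪lam₁, β⟫ * ⟪β, lam₂⟫ = -1 := by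
      rw [real_inner_comm lam₂ β]; exact key
    linarith
  refine ⟨by linarith [fact1 lam₁ hlam₁], fact3, fun hg => by linarith [fact2 hg, fact1 lam₁ hlam₁]⟩
end

section
/- Let $R$ be a simply laced root system, $\varpi_1,\varpi_2$ minuscule weights, $\lambda_i \in W\cdot\varpi_i$, and set $d = d(\lambda_1,\lambda_2) = (\varpi_1,\varpi_2)-(\lambda_1,\lambda_2)$. Then there exists a sequence of roots $\gamma_1,\dots,\gamma_d$ which are pairwise orthogonal and satisfy $(\lambda_1,\gamma_i)(\lambda_2,\gamma_i) < 0$ for all $i$. -/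
open scoped RealInnerProductSpace

variable {E : Type*} [NormedAddCommGroup E] [InnerProductSpace ℝ E]

namespace S7

lemma inner_rr_left (α x y : E) :
    ⟪rootReflection α x, y⟫ = ⟪x, y⟫ - ⟪x, α⟫ * ⟪α, y⟫ := by
  simp [rootReflection, inner_sub_left, real_inner_smul_left]

lemma inner_rr_right (α x y : E) :
    ⟪x, rootReflection α y⟫ = ⟪x, y⟫ - ⟪y, α⟫ * ⟪x, α⟫ := by
  simp [rootReflection, inner_sub_right, real_inner_smul_right]

lemma rr_selfadjoint (α x y : E) :
    ⟪rootReflection α x, y⟫ = ⟪x, rootReflection α y⟫ := by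
  rw [inner_rr_left, inner_rr_right, real_inner_comm α y]
  ring

lemma inner_rr_rr (α x y : E) (h2 : ⟪α, α⟫ = 2) :
    ⟪rootReflection α x, rootReflection α y⟫ = ⟪x, y⟫ := by
  rw [inner_rr_left, inner_rr_right, inner_rr_right, h2, real_inner_comm α y]
  ring

lemma rr_neg (α x : E) : rootReflection (-α) x = rootReflection α x := by
  simp [rootReflection, inner_neg_right]

lemma rr_add (α x y : E) : rootReflection α (x + y) = rootReflection α x + rootReflection α y := by
  simp [rootReflection, inner_add_left, add_smul]; abel

lemma rr_sub (α x y : E) : rootReflection α (x - y) = rootReflection α x - rootReflection α y := by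
  simp [rootReflection, inner_sub_left, sub_smul]; abel

lemma eq_of_inner_two {α β : E} (hα2 : ⟪α, α⟫ = 2) (hβ2 : ⟪β, β⟫ = 2) (h : ⟪α, β⟫ = 2) :
    α = β := by
  have hc : ⟪β, α⟫ = 2 := by rw [real_inner_comm]; exact h
  have h0 : ⟪α - β, α - β⟫ = 0 := by
    rw [inner_sub_left, inner_sub_right, inner_sub_right, hα2, hβ2, h, hc]; ring
  have := inner_self_eq_zero (𝕜 := ℝ).mp h0
  exact sub_eq_zero.mp this

lemma neg_eq_of_inner_neg_two {α β : E} (hα2 : ⟪α, α⟫ = 2) (hβ2 : ⟪β, β⟫ = 2) (h : ⟪α, β⟫ = -2) :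
    β = -α := by
  have hc : ⟪β, α⟫ = -2 := by rw [real_inner_comm]; exact h
  have h0 : ⟪α + β, α + β⟫ = 0 := by
    rw [inner_add_left, inner_add_right, inner_add_right, hα2, hβ2, h, hc]; ring
  have := inner_self_eq_zero (𝕜 := ℝ).mp h0
  linear_combination (norm := module) this


lemma mem_S {x : ℝ} (h : x ∈ ({-1, 0, 1} : Set ℝ)) : x = -1 ∨ x = 0 ∨ x = 1 := by
  simpa [Set.mem_insert_iff, Set.mem_singleton_iff] using h

lemma orbit_tail {R : Set E} {ϖ lam : E} (h : lam ∈ weylOrbit R ϖ) {α : E} (hα : α ∈ R) :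
    rootReflection α lam ∈ weylOrbit R ϖ :=
  Relation.ReflTransGen.tail h ⟨α, hα, rfl⟩

lemma msc {R : Set E} {ϖ : E}
    (hrefl : ∀ α ∈ R, ∀ β ∈ R, rootReflection α β ∈ R)
    (hmin : ∀ α ∈ R, ⟪ϖ, α⟫ ∈ ({-1, 0, 1} : Set ℝ)) {lam : E}
    (h : lam ∈ weylOrbit R ϖ) : ∀ α ∈ R, ⟪lam, α⟫ ∈ ({-1, 0, 1} : Set ℝ) := by
  induction h with
  | refl => exact hmin
  | tail hsub hstep ih =>
      obtain ⟨β, hβ, rfl⟩ := hstep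
      intro α hα
      have := ih (rootReflection β α) (hrefl β hβ α hα)
      rwa [← rr_selfadjoint] at this

lemma inner_list_sum (L : List E) (x : E) :
    ⟪L.sum, x⟫ = (L.map (fun b => ⟪b, x⟫)).sum := by
  induction L with
  | nil => simp
  | cons b T ih => simp [inner_add_left, ih]

structure IsDec (R : Set E) (ϖ lam : E) (L : List E) : Prop where
  mem : ∀ β ∈ L, β ∈ R
  one : ∀ β ∈ L, ⟪ϖ, β⟫ = 1
  orth : L.Pairwise (fun x y => ⟪x, y⟫ = 0)
  eq : lam = ϖ - L.sum

lemma orth_symm : Symmetric (fun x y : E => ⟪x, y⟫ = 0) := by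
  intro x y h; rw [real_inner_comm]; exact h

lemma IsDec.perm {R : Set E} {ϖ lam : E} {L L' : List E} (h : IsDec R ϖ lam L)
    (hp : L.Perm L') : IsDec R ϖ lam L' where
  mem := fun β hβ => h.mem β (hp.symm.subset hβ)
  one := fun β hβ => h.one β (hp.symm.subset hβ)
  orth := (hp.pairwise_iff (fun hxy => orth_symm hxy)).mp h.orth
  eq := by rw [h.eq, hp.sum_eq]

lemma sum_zero_of_nonneg : ∀ (l : List ℝ), (∀ x ∈ l, x = 0 ∨ x = 1 ∨ x = 2) →
    l.sum = 0 → ∀ x ∈ l, x = 0 := by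
  intro l
  induction l with
  | nil => simp
  | cons a t ih =>
      intro hv hs
      have hta : ∀ x ∈ t, 0 ≤ x := by
        intro x hx; rcases hv x (List.mem_cons_of_mem _ hx) with h|h|h <;> simp [h] <;> norm_num
      have hts : 0 ≤ t.sum := List.sum_nonneg hta
      have has : a + t.sum = 0 := by simpa using hs
      have ha0 : a = 0 := by
        rcases hv a (List.mem_cons_self) with h|h|h <;> [skip; linarith; linarith]
        exact h
      intro x hx
      rcases List.mem_cons.mp hx with rfl | hx
      · exact ha0
      · exact ih (fun y hy => hv y (List.mem_cons_of_mem _ hy)) (by linarith) x hx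


lemma extract1 (f : E → ℝ) : ∀ (L : List E), (∀ β ∈ L, f β = 0 ∨ f β = 1 ∨ f β = 2) →
    (L.map f).sum = 1 →
    ∃ b T, L.Perm (b :: T) ∧ f b = 1 ∧ ∀ β ∈ T, f β = 0 := by
  intro L
  induction L with
  | nil => intro _ hs; simp at hs
  | cons a t ih =>
      intro hv hs
      have hvt : ∀ β ∈ t, f β = 0 ∨ f β = 1 ∨ f β = 2 :=
        fun β hβ => hv β (List.mem_cons_of_mem _ hβ)
      have hs' : f a + (t.map f).sum = 1 := by simpa using hs
      have htnn : 0 ≤ (t.map f).sum := by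
        apply List.sum_nonneg
        intro x hx
        obtain ⟨β, hβ, rfl⟩ := List.mem_map.mp hx
        rcases hvt β hβ with h|h|h <;> simp [h]
      rcases hv a (List.mem_cons_self) with h|h|h
      · -- f a = 0 : recurse on tail
        obtain ⟨b, T, hperm, hb, hT⟩ := ih hvt (by linarith)
        refine ⟨b, a :: T, ?_, hb, ?_⟩
        · exact (hperm.cons a).trans (List.Perm.swap b a T)
        · intro β hβ
          rcases List.mem_cons.mp hβ with rfl | hβ
          · exact h
          · exact hT β hβ
      · -- f a = 1 : rest sums to 0
        refine ⟨a, t, List.Perm.refl _, h, ?_⟩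
        have : (t.map f).sum = 0 := by linarith
        intro β hβ
        have := sum_zero_of_nonneg (t.map f)
          (fun x hx => by obtain ⟨c, hc, rfl⟩ := List.mem_map.mp hx; exact hvt c hc) this
          (f β) (List.mem_map.mpr ⟨β, hβ, rfl⟩)
        exact this
      · linarith

lemma extract2 (f : E → ℝ) : ∀ (L : List E), (∀ β ∈ L, f β = 0 ∨ f β = 1 ∨ f β = 2) →
    (L.map f).sum = 2 →
    (∃ b T, L.Perm (b :: T) ∧ f b = 2 ∧ ∀ β ∈ T, f β = 0) ∨
    (∃ b₁ b₂ T, L.Perm (b₁ :: b₂ :: T) ∧ f b₁ = 1 ∧ f b₂ = 1 ∧ ∀ β ∈ T, f β = 0) := by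
  intro L
  induction L with
  | nil => intro _ hs; simp at hs
  | cons a t ih =>
      intro hv hs
      have hvt : ∀ β ∈ t, f β = 0 ∨ f β = 1 ∨ f β = 2 :=
        fun β hβ => hv β (List.mem_cons_of_mem _ hβ)
      have hs' : f a + (t.map f).sum = 2 := by simpa using hs
      rcases hv a (List.mem_cons_self) with h|h|h
      · rcases ih hvt (by linarith) with ⟨b, T, hperm, hb, hT⟩ | ⟨b₁, b₂, T, hperm, hb₁, hb₂, hT⟩
        · refine Or.inl ⟨b, a :: T, ?_, hb, ?_⟩
          · exact (hperm.cons a).trans (List.Perm.swap b a T)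
          · intro β hβ
            rcases List.mem_cons.mp hβ with rfl | hβ
            · exact h
            · exact hT β hβ
        · refine Or.inr ⟨b₁, b₂, a :: T, ?_, hb₁, hb₂, ?_⟩
          · exact (hperm.cons a).trans
              ((List.Perm.swap b₁ a (b₂ :: T)).trans ((List.Perm.swap b₂ a T).cons b₁))
          · intro β hβ
            rcases List.mem_cons.mp hβ with rfl | hβ
            · exact h
            · exact hT β hβ
      · obtain ⟨b, T, hperm, hb, hT⟩ := extract1 f t hvt (by linarith)
        exact Or.inr ⟨a, b, T, hperm.cons a, h, hb, hT⟩
      · refine Or.inl ⟨a, t, List.Perm.refl _, h, ?_⟩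
        intro β hβ
        exact sum_zero_of_nonneg (t.map f)
          (fun x hx => by obtain ⟨c, hc, rfl⟩ := List.mem_map.mp hx; exact hvt c hc)
          (by linarith) (f β) (List.mem_map.mpr ⟨β, hβ, rfl⟩)


section Ambient

variable {R : Set E} {ϖ : E}

lemma rr_fix {α x : E} (h : ⟪x, α⟫ = 0) : rootReflection α x = x := by
  rw [rootReflection, h, zero_smul, sub_zero]

lemma rr_list_sum (α : E) (L : List E) :
    (L.map (rootReflection α)).sum = rootReflection α L.sum := by
  induction L with
  | nil => simp [rootReflection]
  | cons b T ih => simp [ih, rr_add]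

lemma t_values (hrefl : ∀ α ∈ R, ∀ β ∈ R, rootReflection α β ∈ R)
    (hmin : ∀ α ∈ R, ⟪ϖ, α⟫ ∈ ({-1, 0, 1} : Set ℝ)) {β δ : E} (hβ : β ∈ R) (hδ : δ ∈ R)
    (hβ1 : ⟪ϖ, β⟫ = 1) (hδ1 : ⟪ϖ, δ⟫ = 1) :
    ⟪β, δ⟫ = 0 ∨ ⟪β, δ⟫ = 1 ∨ ⟪β, δ⟫ = 2 := by
  have hr : rootReflection β δ ∈ R := hrefl β hβ δ hδ
  have hm := mem_S (hmin _ hr)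
  rw [inner_rr_right, hβ1, hδ1, mul_one, real_inner_comm β δ] at hm
  rcases hm with h|h|h
  · right; right; linarith
  · right; left; linarith
  · left; linarith

lemma dec_inner (hd : IsDec R ϖ lam L) (δ : E) :
    ⟪lam, δ⟫ = ⟪ϖ, δ⟫ - (L.map (fun b => ⟪b, δ⟫)).sum := by
  rw [hd.eq, inner_sub_left, inner_list_sum]

lemma shrink (hlen : ∀ α ∈ R, ⟪α, α⟫ = 2)
    (hrefl : ∀ α ∈ R, ∀ β ∈ R, rootReflection α β ∈ R)
    (hmin : ∀ α ∈ R, ⟪ϖ, α⟫ ∈ ({-1, 0, 1} : Set ℝ))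
    {lam δ : E} {L : List E} (hd : IsDec R ϖ lam L) (hδ : δ ∈ R)
    (hδ1 : ⟪ϖ, δ⟫ = 1) (hlδ : ⟪lam, δ⟫ = -1) :
    ∃ L', IsDec R ϖ (lam + δ) L' ∧ L'.length + 1 = L.length := by
  have hvals : ∀ β ∈ L, ⟪β, δ⟫ = 0 ∨ ⟪β, δ⟫ = 1 ∨ ⟪β, δ⟫ = 2 :=
    fun β hβ => t_values hrefl hmin (hd.mem β hβ) hδ (hd.one β hβ) hδ1
  have hsum : (L.map (fun b => ⟪b, δ⟫)).sum = 2 := by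
    have := dec_inner hd δ
    rw [hlδ, hδ1] at this
    linarith
  rcases extract2 _ L hvals hsum with ⟨b, T, hperm, hb, hT⟩ | ⟨b₁, b₂, T, hperm, hb₁, hb₂, hT⟩
  · -- b = δ, drop it
    have hd' := hd.perm hperm
    have hbδ : b = δ := eq_of_inner_two (hlen b (hd'.mem b (List.mem_cons_self))) (hlen δ hδ) hb
    subst hbδ
    refine ⟨T, ⟨fun β hβ => hd'.mem β (List.mem_cons_of_mem _ hβ),
      fun β hβ => hd'.one β (List.mem_cons_of_mem _ hβ),
      (List.pairwise_cons.mp hd'.orth).2, ?_⟩, ?_⟩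
    · have := hd'.eq
      rw [List.sum_cons] at this
      rw [this]; abel
    · have := hperm.length_eq
      simpa using this.symm
  · -- merge b₁, b₂ into b₁ + b₂ - δ
    have hd' := hd.perm hperm
    have hmem₁ : b₁ ∈ R := hd'.mem b₁ (List.mem_cons_self)
    have hmem₂ : b₂ ∈ R := hd'.mem b₂ (List.mem_cons_of_mem _ (List.mem_cons_self))
    obtain ⟨h12, hpw⟩ := List.pairwise_cons.mp hd'.orth
    obtain ⟨h2T, hpwT⟩ := List.pairwise_cons.mp hpw
    have horth12 : ⟪b₁, b₂⟫ = 0 := h12 b₂ (List.mem_cons_self)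
    -- b₁ - δ ∈ R
    have hr1 : rootReflection δ b₁ = b₁ - δ := by
      rw [rootReflection, hb₁, one_smul]
    have hmem1δ : b₁ - δ ∈ R := hr1 ▸ hrefl δ hδ b₁ hmem₁
    have hinner : ⟪b₁ - δ, b₂⟫ = -1 := by
      rw [inner_sub_left, horth12, real_inner_comm b₂ δ, hb₂]; ring
    have hr2 : rootReflection b₂ (b₁ - δ) = b₁ + b₂ - δ := by
      rw [rootReflection, hinner]; module
    have hmemδ' : b₁ + b₂ - δ ∈ R := hr2 ▸ hrefl b₂ hmem₂ (b₁ - δ) hmem1δ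
    set δ' := b₁ + b₂ - δ with hδ'def
    have hδ'T : ∀ β ∈ T, ⟪δ', β⟫ = 0 := by
      intro β hβ
      have e1 : ⟪b₁, β⟫ = 0 := h12 β (List.mem_cons_of_mem _ hβ)
      have e2 : ⟪b₂, β⟫ = 0 := h2T β hβ
      have e3 : ⟪δ, β⟫ = 0 := by rw [real_inner_comm]; exact hT β hβ
      rw [hδ'def, inner_sub_left, inner_add_left, e1, e2, e3]; ring
    refine ⟨δ' :: T, ⟨?_, ?_, ?_, ?_⟩, ?_⟩
    · intro β hβ
      rcases List.mem_cons.mp hβ with rfl | hβ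
      · exact hmemδ'
      · exact hd'.mem β (List.mem_cons_of_mem _ (List.mem_cons_of_mem _ hβ))
    · intro β hβ
      rcases List.mem_cons.mp hβ with rfl | hβ
      · rw [hδ'def, inner_sub_right, inner_add_right, hd'.one b₁ (List.mem_cons_self),
          hd'.one b₂ (List.mem_cons_of_mem _ (List.mem_cons_self)), hδ1]; ring
      · exact hd'.one β (List.mem_cons_of_mem _ (List.mem_cons_of_mem _ hβ))
    · exact List.pairwise_cons.mpr ⟨hδ'T, hpwT⟩
    · have := hd'.eq
      rw [List.sum_cons, List.sum_cons] at this
      rw [this, List.sum_cons, hδ'def]; module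
    · have := hperm.length_eq
      simp at this ⊢
      omega

lemma extend (hrefl : ∀ α ∈ R, ∀ β ∈ R, rootReflection α β ∈ R)
    (hmin : ∀ α ∈ R, ⟪ϖ, α⟫ ∈ ({-1, 0, 1} : Set ℝ))
    {lam δ : E} {L : List E} (hd : IsDec R ϖ lam L) (hδ : δ ∈ R)
    (hδ1 : ⟪ϖ, δ⟫ = 1) (hlδ : ⟪lam, δ⟫ = 1) :
    IsDec R ϖ (lam - δ) (δ :: L) := by
  have hvals : ∀ β ∈ L, ⟪β, δ⟫ = 0 ∨ ⟪β, δ⟫ = 1 ∨ ⟪β, δ⟫ = 2 :=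
    fun β hβ => t_values hrefl hmin (hd.mem β hβ) hδ (hd.one β hβ) hδ1
  have hsum : (L.map (fun b => ⟪b, δ⟫)).sum = 0 := by
    have := dec_inner hd δ
    rw [hlδ, hδ1] at this
    linarith
  have hzero : ∀ β ∈ L, ⟪β, δ⟫ = 0 := by
    intro β hβ
    exact sum_zero_of_nonneg (L.map (fun b => ⟪b, δ⟫))
      (fun x hx => by obtain ⟨c, hc, rfl⟩ := List.mem_map.mp hx; exact hvals c hc)
      hsum _ (List.mem_map.mpr ⟨β, hβ, rfl⟩)
  refine ⟨?_, ?_, ?_, ?_⟩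
  · intro β hβ
    rcases List.mem_cons.mp hβ with rfl | hβ
    · exact hδ
    · exact hd.mem β hβ
  · intro β hβ
    rcases List.mem_cons.mp hβ with rfl | hβ
    · exact hδ1
    · exact hd.one β hβ
  · exact List.pairwise_cons.mpr ⟨fun β hβ => by rw [real_inner_comm]; exact hzero β hβ, hd.orth⟩
  · rw [hd.eq, List.sum_cons]; module

lemma transport (hlen : ∀ α ∈ R, ⟪α, α⟫ = 2)
    (hrefl : ∀ α ∈ R, ∀ β ∈ R, rootReflection α β ∈ R)
    {lam α : E} {L : List E} (hd : IsDec R ϖ lam L) (hα : α ∈ R) (hϖα : ⟪ϖ, α⟫ = 0) :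
    IsDec R ϖ (rootReflection α lam) (L.map (rootReflection α)) := by
  have hfix : rootReflection α ϖ = ϖ := rr_fix hϖα
  have h2 : ⟪α, α⟫ = 2 := hlen α hα
  refine ⟨?_, ?_, ?_, ?_⟩
  · intro β hβ
    obtain ⟨c, hc, rfl⟩ := List.mem_map.mp hβ
    exact hrefl α hα c (hd.mem c hc)
  · intro β hβ
    obtain ⟨c, hc, rfl⟩ := List.mem_map.mp hβ
    rw [← rr_selfadjoint, hfix]
    exact hd.one c hc
  · refine List.Pairwise.map _ ?_ hd.orth
    intro a b hab
    rw [inner_rr_rr _ _ _ h2]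
    exact hab
  · rw [rr_list_sum, hd.eq, rr_sub, hfix]


lemma rr_eq_sub {μ α : E} (h : ⟪μ, α⟫ = 1) : rootReflection α μ = μ - α := by
  rw [rootReflection, h, one_smul]

lemma rr_eq_add {μ α : E} (h : ⟪μ, α⟫ = -1) : rootReflection α μ = μ + α := by
  rw [rootReflection, h]; module

lemma dec_step (hlen : ∀ α ∈ R, ⟪α, α⟫ = 2)
    (hneg : ∀ α ∈ R, -α ∈ R)
    (hrefl : ∀ α ∈ R, ∀ β ∈ R, rootReflection α β ∈ R)
    (hmin : ∀ α ∈ R, ⟪ϖ, α⟫ ∈ ({-1, 0, 1} : Set ℝ))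
    {μ α : E} {L : List E} (hd : IsDec R ϖ μ L) (hα : α ∈ R)
    (hμm : ∀ β ∈ R, ⟪μ, β⟫ ∈ ({-1, 0, 1} : Set ℝ)) :
    ∃ L', IsDec R ϖ (rootReflection α μ) L' := by
  have aux : ∀ α' ∈ R, (⟪ϖ, α'⟫ = 0 ∨ ⟪ϖ, α'⟫ = 1) →
      ∃ L', IsDec R ϖ (rootReflection α' μ) L' := by
    intro α' hα' ha
    rcases ha with ha | ha
    · exact ⟨L.map (rootReflection α'), transport hlen hrefl hd hα' ha⟩
    · rcases mem_S (hμm α' hα') with hc | hc | hc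
      · rw [rr_eq_add hc]
        obtain ⟨L', hL', _⟩ := shrink hlen hrefl hmin hd hα' ha hc
        exact ⟨L', hL'⟩
      · rw [rr_fix hc]
        exact ⟨L, hd⟩
      · rw [rr_eq_sub hc]
        exact ⟨α' :: L, extend hrefl hmin hd hα' ha hc⟩
  rcases mem_S (hmin α hα) with ha | ha | ha
  · rw [← rr_neg]
    refine aux (-α) (hneg α hα) (Or.inr ?_)
    rw [inner_neg_right, ha]; ring
  · exact aux α hα (Or.inl ha)
  · exact aux α hα (Or.inr ha)

lemma existsDec (hlen : ∀ α ∈ R, ⟪α, α⟫ = 2)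
    (hneg : ∀ α ∈ R, -α ∈ R)
    (hrefl : ∀ α ∈ R, ∀ β ∈ R, rootReflection α β ∈ R)
    (hmin : ∀ α ∈ R, ⟪ϖ, α⟫ ∈ ({-1, 0, 1} : Set ℝ))
    {lam : E} (h : lam ∈ weylOrbit R ϖ) :
    ∃ L, IsDec R ϖ lam L := by
  induction h with
  | refl => exact ⟨[], ⟨by simp, by simp, by simp, by simp⟩⟩
  | tail hsub hstep ih =>
      obtain ⟨L, hL⟩ := ih
      obtain ⟨α, hα, rfl⟩ := hstep
      exact dec_step hlen hneg hrefl hmin hL hα (msc hrefl hmin hsub)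

lemma normalize (hneg : ∀ α ∈ R, -α ∈ R) {x y : E}
    (hxS : ∀ α ∈ R, ⟪x, α⟫ ∈ ({-1, 0, 1} : Set ℝ))
    (hyS : ∀ α ∈ R, ⟪y, α⟫ ∈ ({-1, 0, 1} : Set ℝ))
    {d : ℕ} {γ : Fin d → E} (hγR : ∀ i, γ i ∈ R)
    (horth : ∀ i j, i ≠ j → ⟪γ i, γ j⟫ = 0)
    (hprod : ∀ i, ⟪x, γ i⟫ * ⟪y, γ i⟫ < 0) :
    ∃ σ : Fin d → E, (∀ i, σ i ∈ R) ∧ (∀ i j, i ≠ j → ⟪σ i, σ j⟫ = 0) ∧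
      (∀ i, ⟪x, σ i⟫ = 1 ∧ ⟪y, σ i⟫ = -1) := by
  refine ⟨fun i => if 0 < ⟪x, γ i⟫ then γ i else -(γ i), ?_, ?_, ?_⟩
  · intro i
    by_cases h : 0 < ⟪x, γ i⟫ <;> simp [h]
    · exact hγR i
    · exact hneg _ (hγR i)
  · intro i j hij
    by_cases h1 : 0 < ⟪x, γ i⟫ <;> by_cases h2 : 0 < ⟪x, γ j⟫ <;>
      simp [h1, h2, inner_neg_left, inner_neg_right, horth i j hij]
  · intro i
    have hx := mem_S (hxS _ (hγR i))
    have hy := mem_S (hyS _ (hγR i))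
    have hp := hprod i
    by_cases h : 0 < ⟪x, γ i⟫
    · simp only [if_pos h]
      have hx1 : ⟪x, γ i⟫ = 1 := by rcases hx with hx | hx | hx <;> [linarith; linarith; exact hx]
      have hy1 : ⟪y, γ i⟫ = -1 := by
        rcases hy with hy | hy | hy
        · exact hy
        · rw [hx1, hy] at hp; norm_num at hp
        · rw [hx1, hy] at hp; norm_num at hp
      exact ⟨hx1, hy1⟩
    · simp only [if_neg h, inner_neg_right]
      push_neg at h
      have hx1 : ⟪x, γ i⟫ = -1 := by
        rcases hx with hx | hx | hx
        · exact hx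
        · rw [hx] at hp; norm_num at hp
        · linarith
      have hy1 : ⟪y, γ i⟫ = 1 := by
        rcases hy with hy | hy | hy
        · rw [hx1, hy] at hp; norm_num at hp
        · rw [hx1, hy] at hp; norm_num at hp
        · exact hy
      rw [hx1, hy1]; norm_num


lemma key_t (hlen : ∀ α ∈ R, ⟪α, α⟫ = 2) {x y ε : E}
    (hy'S : ∀ α ∈ R, ⟪y - ε, α⟫ ∈ ({-1, 0, 1} : Set ℝ))
    (hε : ε ∈ R) {σ : E} (hσ : σ ∈ R) (hxσ : ⟪x, σ⟫ = 1) (hyσ : ⟪y, σ⟫ = -1)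
    (hxεval : ⟪x, ε⟫ = 0 ∨ ⟪x, ε⟫ = 1) :
    ⟪ε, σ⟫ = 0 ∨ ⟪ε, σ⟫ = -1 := by
  have hm := mem_S (hy'S _ hσ)
  rw [inner_sub_left, hyσ] at hm
  have ht : ⟪ε, σ⟫ = 0 ∨ ⟪ε, σ⟫ = -1 ∨ ⟪ε, σ⟫ = -2 := by
    rcases hm with h | h | h
    · left; linarith
    · right; left; linarith
    · right; right; linarith
  rcases ht with h | h | h
  · exact Or.inl h
  · exact Or.inr h
  · exfalso
    have hσε : σ = -ε := neg_eq_of_inner_neg_two (hlen ε hε) (hlen σ hσ) h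
    rw [hσε, inner_neg_right] at hxσ
    rcases hxεval with h' | h' <;> rw [h'] at hxσ <;> norm_num at hxσ

lemma sum_root (hrefl : ∀ α ∈ R, ∀ β ∈ R, rootReflection α β ∈ R)
    {σ ε : E} (hσ : σ ∈ R) (hε : ε ∈ R) (h : ⟪ε, σ⟫ = -1) : σ + ε ∈ R := by
  have : rootReflection σ ε = ε + σ := rr_eq_add h
  have := hrefl σ hσ ε hε
  rw [rr_eq_add h] at this
  rwa [add_comm]

lemma fixup0 (hlen : ∀ α ∈ R, ⟪α, α⟫ = 2)
    (hrefl : ∀ α ∈ R, ∀ β ∈ R, rootReflection α β ∈ R)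
    {x y ε : E}
    (hy'S : ∀ α ∈ R, ⟪y - ε, α⟫ ∈ ({-1, 0, 1} : Set ℝ))
    (hε : ε ∈ R) (hyε : ⟪y, ε⟫ = 1) (hxε : ⟪x, ε⟫ = 0)
    {d : ℕ} {σ : Fin d → E} (hσR : ∀ i, σ i ∈ R)
    (horth : ∀ i j, i ≠ j → ⟪σ i, σ j⟫ = 0)
    (hvals : ∀ i, ⟪x, σ i⟫ = 1 ∧ ⟪y, σ i⟫ = -1) :
    ∃ γ' : Fin d → E, (∀ i, γ' i ∈ R) ∧ (∀ i j, i ≠ j → ⟪γ' i, γ' j⟫ = 0) ∧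
      (∀ i, ⟪x, γ' i⟫ = 1 ∧ ⟪y - ε, γ' i⟫ = -1) := by
  have key : ∀ i, ⟪ε, σ i⟫ = 0 ∨ ⟪ε, σ i⟫ = -1 := fun i =>
    key_t hlen hy'S hε (hσR i) (hvals i).1 (hvals i).2 (Or.inl hxε)
  refine ⟨fun i => if ⟪ε, σ i⟫ = 0 then σ i else σ i + ε, ?_, ?_, ?_⟩
  · intro i
    by_cases h : ⟪ε, σ i⟫ = 0
    · simpa [h] using hσR i
    · have ht : ⟪ε, σ i⟫ = -1 := (key i).resolve_left h
      simpa [h] using sum_root hrefl (hσR i) hε ht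
  · intro i j hij
    by_cases h1 : ⟪ε, σ i⟫ = 0 <;> by_cases h2 : ⟪ε, σ j⟫ = 0 <;>
      simp only [if_pos, if_neg, h1, h2, ite_true, ite_false, if_true, if_false] <;>
      [skip; skip; skip; skip]
    · exact horth i j hij
    · rw [inner_add_right, horth i j hij, real_inner_comm ε (σ i), h1]; ring
    · have ht : ⟪ε, σ i⟫ = -1 := (key i).resolve_left h1
      rw [inner_add_left, horth i j hij, h2]; ring
    · have ht1 : ⟪ε, σ i⟫ = -1 := (key i).resolve_left h1
      have ht2 : ⟪ε, σ j⟫ = -1 := (key j).resolve_left h2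
      rw [inner_add_left, inner_add_right, inner_add_right, horth i j hij,
        real_inner_comm ε (σ i), ht1, ht2, hlen ε hε]
      ring
  · intro i
    by_cases h : ⟪ε, σ i⟫ = 0
    · simp only [if_pos h]
      refine ⟨(hvals i).1, ?_⟩
      rw [inner_sub_left, (hvals i).2, h]; ring
    · have ht : ⟪ε, σ i⟫ = -1 := (key i).resolve_left h
      simp only [if_neg h]
      constructor
      · rw [inner_add_right, (hvals i).1, hxε]; ring
      · rw [inner_sub_left, inner_add_right, inner_add_right, (hvals i).2, hyε, ht,
          hlen ε hε]
        ring

lemma fixup1 (hlen : ∀ α ∈ R, ⟪α, α⟫ = 2)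
    (hrefl : ∀ α ∈ R, ∀ β ∈ R, rootReflection α β ∈ R)
    {x y ε : E}
    (hxS : ∀ α ∈ R, ⟪x, α⟫ ∈ ({-1, 0, 1} : Set ℝ))
    (hy'S : ∀ α ∈ R, ⟪y - ε, α⟫ ∈ ({-1, 0, 1} : Set ℝ))
    (hε : ε ∈ R) (hyε : ⟪y, ε⟫ = 1) (hxε : ⟪x, ε⟫ = 1)
    {d : ℕ} {σ : Fin d → E} (hσR : ∀ i, σ i ∈ R)
    (horth : ∀ i j, i ≠ j → ⟪σ i, σ j⟫ = 0)
    (hvals : ∀ i, ⟪x, σ i⟫ = 1 ∧ ⟪y, σ i⟫ = -1) :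
    ∃ γ' : Fin (d + 1) → E, (∀ i, γ' i ∈ R) ∧ (∀ i j, i ≠ j → ⟪γ' i, γ' j⟫ = 0) ∧
      (∀ i, ⟪x, γ' i⟫ = 1 ∧ ⟪y - ε, γ' i⟫ = -1) := by
  have key : ∀ i, ⟪ε, σ i⟫ = 0 := by
    intro i
    rcases key_t hlen hy'S hε (hσR i) (hvals i).1 (hvals i).2 (Or.inr hxε) with h | h
    · exact h
    · exfalso
      have hmem : σ i + ε ∈ R := sum_root hrefl (hσR i) hε h
      have := mem_S (hxS _ hmem)
      rw [inner_add_right, (hvals i).1, hxε] at this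
      rcases this with h' | h' | h' <;> norm_num at h'
  refine ⟨Fin.cons ε σ, ?_, ?_, ?_⟩
  · intro i
    refine Fin.cases ?_ ?_ i
    · simpa using hε
    · intro j; simpa using hσR j
  · intro i j hij
    rcases Fin.eq_zero_or_eq_succ i with rfl | ⟨i', rfl⟩ <;>
      rcases Fin.eq_zero_or_eq_succ j with rfl | ⟨j', rfl⟩
    · exact absurd rfl hij
    · simp only [Fin.cons_zero, Fin.cons_succ]
      exact key j'
    · simp only [Fin.cons_zero, Fin.cons_succ]
      rw [real_inner_comm]; exact key i'
    · simp only [Fin.cons_succ]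
      exact horth i' j' (fun hc => hij (by rw [hc]))
  · intro i
    rcases Fin.eq_zero_or_eq_succ i with rfl | ⟨j, rfl⟩
    · simp only [Fin.cons_zero]
      refine ⟨hxε, ?_⟩
      rw [inner_sub_left, hyε, hlen ε hε]; ring
    · simp only [Fin.cons_succ]
      refine ⟨(hvals j).1, ?_⟩
      rw [inner_sub_left, (hvals j).2, key j]; ring


lemma dec_head (hlen : ∀ α ∈ R, ⟪α, α⟫ = 2) {lam δ : E} {T : List E}
    (hd : IsDec R ϖ lam (δ :: T)) :
    ⟪lam, δ⟫ = -1 ∧ IsDec R ϖ (lam + δ) T := by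
  have hδR : δ ∈ R := hd.mem δ (List.mem_cons_self)
  obtain ⟨hδT, hpwT⟩ := List.pairwise_cons.mp hd.orth
  have hsumT : ⟪T.sum, δ⟫ = 0 := by
    rw [inner_list_sum]
    apply List.sum_eq_zero
    intro x hx
    obtain ⟨c, hc, rfl⟩ := List.mem_map.mp hx
    rw [real_inner_comm]; exact hδT c hc
  have h1 : ⟪lam, δ⟫ = -1 := by
    rw [hd.eq, inner_sub_left, List.sum_cons, inner_add_left, hsumT,
      hd.one δ (List.mem_cons_self), hlen δ hδR]
    ring
  refine ⟨h1, ⟨fun β hβ => hd.mem β (List.mem_cons_of_mem _ hβ),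
    fun β hβ => hd.one β (List.mem_cons_of_mem _ hβ), hpwT, ?_⟩⟩
  rw [hd.eq, List.sum_cons]; module

end Ambient

section Master

variable {R Rpos : Set E} {ϖ₁ ϖ₂ : E}

lemma dom21 (hpos : R = Rpos ∪ (-Rpos))
    (hdom₁ : ∀ α ∈ Rpos, 0 ≤ ⟪ϖ₁, α⟫) (hdom₂ : ∀ α ∈ Rpos, 0 ≤ ⟪ϖ₂, α⟫)
    {α : E} (hα : α ∈ R) (h2 : 0 < ⟪ϖ₂, α⟫) : 0 ≤ ⟪ϖ₁, α⟫ := by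
  rcases (hpos ▸ hα : α ∈ Rpos ∪ (-Rpos)) with h | h
  · exact hdom₁ α h
  · exfalso
    have hm : -α ∈ Rpos := Set.mem_neg.mp h
    have := hdom₂ (-α) hm
    rw [inner_neg_right] at this
    linarith

lemma dom12 (hpos : R = Rpos ∪ (-Rpos))
    (hdom₁ : ∀ α ∈ Rpos, 0 ≤ ⟪ϖ₁, α⟫) (hdom₂ : ∀ α ∈ Rpos, 0 ≤ ⟪ϖ₂, α⟫)
    {α : E} (hα : α ∈ R) (h1 : 0 < ⟪ϖ₁, α⟫) : 0 ≤ ⟪ϖ₂, α⟫ := by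
  rcases (hpos ▸ hα : α ∈ Rpos ∪ (-Rpos)) with h | h
  · exact hdom₂ α h
  · exfalso
    have hm : -α ∈ Rpos := Set.mem_neg.mp h
    have := hdom₁ (-α) hm
    rw [inner_neg_right] at this
    linarith

lemma master
    (hpos : R = Rpos ∪ (-Rpos))
    (hlen : ∀ α ∈ R, ⟪α, α⟫ = 2)
    (hneg : ∀ α ∈ R, -α ∈ R)
    (hrefl : ∀ α ∈ R, ∀ β ∈ R, rootReflection α β ∈ R)
    (hdom₁ : ∀ α ∈ Rpos, 0 ≤ ⟪ϖ₁, α⟫) (hdom₂ : ∀ α ∈ Rpos, 0 ≤ ⟪ϖ₂, α⟫)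
    (hmin₁ : ∀ α ∈ R, ⟪ϖ₁, α⟫ ∈ ({-1, 0, 1} : Set ℝ))
    (hmin₂ : ∀ α ∈ R, ⟪ϖ₂, α⟫ ∈ ({-1, 0, 1} : Set ℝ))
    (n : ℕ) :
    ∀ (lam₁ lam₂ : E) (L₁ L₂ : List E),
      lam₁ ∈ weylOrbit R ϖ₁ → lam₂ ∈ weylOrbit R ϖ₂ →
      IsDec R ϖ₁ lam₁ L₁ → IsDec R ϖ₂ lam₂ L₂ →
      L₁.length + L₂.length ≤ n →
      ∃ (d : ℕ) (γ : Fin d → E),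
        (d : ℝ) = ⟪ϖ₁, ϖ₂⟫ - ⟪lam₁, lam₂⟫ ∧
        (∀ i, γ i ∈ R) ∧
        (∀ i j, i ≠ j → ⟪γ i, γ j⟫ = 0) ∧
        (∀ i, ⟪lam₁, γ i⟫ * ⟪lam₂, γ i⟫ < 0) := by
  induction n using Nat.strong_induction_on with
  | _ n IH =>
  intro lam₁ lam₂ L₁ L₂ horb₁ horb₂ hd₁ hd₂ hnle
  match L₂, hd₂ with
  | δ :: T₂, hd₂ =>
    have hδR : δ ∈ R := hd₂.mem δ (List.mem_cons_self)
    have hϖ₂δ : ⟪ϖ₂, δ⟫ = 1 := hd₂.one δ (List.mem_cons_self)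
    obtain ⟨hl2d, hd₂'⟩ := dec_head hlen hd₂
    have horb₂' : lam₂ + δ ∈ weylOrbit R ϖ₂ := by
      have := orbit_tail horb₂ hδR
      rwa [rr_eq_add hl2d] at this
    have hmsc₁ := msc hrefl hmin₁ horb₁
    have hmsc₂ := msc hrefl hmin₂ horb₂
    have hmsc₂' := msc hrefl hmin₂ horb₂'
    have hyε : ⟪lam₂ + δ, δ⟫ = 1 := by
      rw [inner_add_left, hl2d, hlen δ hδR]; ring
    have hy'S : ∀ α ∈ R, ⟪lam₂ + δ - δ, α⟫ ∈ ({-1, 0, 1} : Set ℝ) := by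
      intro α hα; rw [add_sub_cancel_right]; exact hmsc₂ α hα
    rcases mem_S (hmsc₁ δ hδR) with ha | ha | ha
    · -- a = -1 : reflect both sides by δ
      have hbval : ⟪ϖ₁, δ⟫ = 0 ∨ ⟪ϖ₁, δ⟫ = 1 := by
        have hge : 0 ≤ ⟪ϖ₁, δ⟫ := dom21 hpos hdom₁ hdom₂ hδR (by rw [hϖ₂δ]; norm_num)
        rcases mem_S (hmin₁ δ hδR) with h | h | h
        · exfalso; linarith
        · exact Or.inl h
        · exact Or.inr h
      have horb₁' : lam₁ + δ ∈ weylOrbit R ϖ₁ := by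
        have := orbit_tail horb₁ hδR
        rwa [rr_eq_add ha] at this
      obtain ⟨L₁', hd₁', hlen₁'⟩ :
          ∃ L₁', IsDec R ϖ₁ (lam₁ + δ) L₁' ∧ L₁'.length ≤ L₁.length := by
        rcases hbval with hb | hb
        · refine ⟨L₁.map (rootReflection δ), ?_, by simp⟩
          have := transport hlen hrefl hd₁ hδR hb
          rwa [rr_eq_add ha] at this
        · obtain ⟨L', hL', hlenL'⟩ := shrink hlen hrefl hmin₁ hd₁ hδR hb ha
          exact ⟨L', hL', by omega⟩
      have hlt : L₁'.length + T₂.length < n := by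
        simp only [List.length_cons] at hnle
        omega
      obtain ⟨d, γ', hcount, hγR, hγorth, hγprod⟩ :=
        IH _ hlt (lam₁ + δ) (lam₂ + δ) L₁' T₂ horb₁' horb₂' hd₁' hd₂' le_rfl
      refine ⟨d, fun i => rootReflection δ (γ' i), ?_, ?_, ?_, ?_⟩
      · have hex : ⟪lam₁ + δ, lam₂ + δ⟫ = ⟪lam₁, lam₂⟫ := by
          rw [inner_add_left, inner_add_right, inner_add_right, ha, hlen δ hδR,
            real_inner_comm lam₂ δ, hl2d]
          ring
        rw [hcount, hex]
      · exact fun i => hrefl δ hδR _ (hγR i)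
      · intro i j hij
        rw [inner_rr_rr _ _ _ (hlen δ hδR)]
        exact hγorth i j hij
      · intro i
        have e1 : ⟪lam₁, rootReflection δ (γ' i)⟫ = ⟪lam₁ + δ, γ' i⟫ := by
          rw [← rr_selfadjoint, rr_eq_add ha]
        have e2 : ⟪lam₂, rootReflection δ (γ' i)⟫ = ⟪lam₂ + δ, γ' i⟫ := by
          rw [← rr_selfadjoint, rr_eq_add hl2d]
        rw [e1, e2]
        exact hγprod i
    · -- a = 0
      have hlt : L₁.length + T₂.length < n := by
        simp only [List.length_cons] at hnle; omega
      obtain ⟨d, γ', hcount, hγR, hγorth, hγprod⟩ :=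
        IH _ hlt lam₁ (lam₂ + δ) L₁ T₂ horb₁ horb₂' hd₁ hd₂' le_rfl
      obtain ⟨σ, hσR, hσorth, hσvals⟩ :=
        normalize hneg hmsc₁ hmsc₂' hγR hγorth hγprod
      obtain ⟨γ'', hR'', horth'', hvals''⟩ :=
        fixup0 hlen hrefl hy'S hδR hyε ha hσR hσorth hσvals
      rw [add_sub_cancel_right] at hvals''
      refine ⟨d, γ'', ?_, hR'', horth'', ?_⟩
      · rw [hcount, inner_add_right, ha]
        ring
      · intro i
        rw [(hvals'' i).1, (hvals'' i).2]
        norm_num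
    · -- a = 1
      have hlt : L₁.length + T₂.length < n := by
        simp only [List.length_cons] at hnle; omega
      obtain ⟨d, γ', hcount, hγR, hγorth, hγprod⟩ :=
        IH _ hlt lam₁ (lam₂ + δ) L₁ T₂ horb₁ horb₂' hd₁ hd₂' le_rfl
      obtain ⟨σ, hσR, hσorth, hσvals⟩ :=
        normalize hneg hmsc₁ hmsc₂' hγR hγorth hγprod
      obtain ⟨γ'', hR'', horth'', hvals''⟩ :=
        fixup1 hlen hrefl hmsc₁ hy'S hδR hyε ha hσR hσorth hσvals
      rw [add_sub_cancel_right] at hvals''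
      refine ⟨d + 1, γ'', ?_, hR'', horth'', ?_⟩
      · push_cast
        rw [hcount, inner_add_right, ha]
        ring
      · intro i
        rw [(hvals'' i).1, (hvals'' i).2]
        norm_num
  | [], hd₂ =>
    have hlam₂ : lam₂ = ϖ₂ := by simpa using hd₂.eq
    rw [hlam₂] at horb₂ hd₂ ⊢
    match L₁, hd₁ with
    | [], hd₁ =>
      have hlam₁ : lam₁ = ϖ₁ := by simpa using hd₁.eq
      rw [hlam₁]
      exact ⟨0, Fin.elim0, by simp, fun i => i.elim0, fun i => i.elim0, fun i => i.elim0⟩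
    | β :: T₁, hd₁ =>
      have hβR : β ∈ R := hd₁.mem β (List.mem_cons_self)
      have hϖ₁β : ⟪ϖ₁, β⟫ = 1 := hd₁.one β (List.mem_cons_self)
      obtain ⟨hl1b, hd₁'⟩ := dec_head hlen hd₁
      have horb₁' : lam₁ + β ∈ weylOrbit R ϖ₁ := by
        have := orbit_tail horb₁ hβR
        rwa [rr_eq_add hl1b] at this
      have hmsc₁ := msc hrefl hmin₁ horb₁
      have hmsc₁' := msc hrefl hmin₁ horb₁'
      have hyε : ⟪lam₁ + β, β⟫ = 1 := by
        rw [inner_add_left, hl1b, hlen β hβR]; ring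
      have hy'S : ∀ α ∈ R, ⟪lam₁ + β - β, α⟫ ∈ ({-1, 0, 1} : Set ℝ) := by
        intro α hα; rw [add_sub_cancel_right]; exact hmsc₁ α hα
      have hlt : T₁.length + ([] : List E).length < n := by
        simp only [List.length_cons] at hnle
        simp only [List.length_nil]
        omega
      obtain ⟨d, γ', hcount, hγR, hγorth, hγprod⟩ :=
        IH _ hlt (lam₁ + β) ϖ₂ T₁ [] horb₁' horb₂ hd₁' hd₂ le_rfl
      have hγprod' : ∀ i, ⟪ϖ₂, γ' i⟫ * ⟪lam₁ + β, γ' i⟫ < 0 := by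
        intro i; rw [mul_comm]; exact hγprod i
      obtain ⟨σ, hσR, hσorth, hσvals⟩ :=
        normalize hneg hmin₂ hmsc₁' hγR hγorth hγprod'
      have ha'val : ⟪ϖ₂, β⟫ = 0 ∨ ⟪ϖ₂, β⟫ = 1 := by
        have hge : 0 ≤ ⟪ϖ₂, β⟫ := dom12 hpos hdom₁ hdom₂ hβR (by rw [hϖ₁β]; norm_num)
        rcases mem_S (hmin₂ β hβR) with h | h | h
        · exfalso; linarith
        · exact Or.inl h
        · exact Or.inr h
      rcases ha'val with ha' | ha'
      · obtain ⟨γ'', hR'', horth'', hvals''⟩ :=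
          fixup0 hlen hrefl hy'S hβR hyε ha' hσR hσorth hσvals
        rw [add_sub_cancel_right] at hvals''
        refine ⟨d, γ'', ?_, hR'', horth'', ?_⟩
        · rw [hcount, inner_add_left, real_inner_comm ϖ₂ β, ha']
          ring
        · intro i
          rw [(hvals'' i).1, (hvals'' i).2]
          norm_num
      · obtain ⟨γ'', hR'', horth'', hvals''⟩ :=
          fixup1 hlen hrefl hmin₂ hy'S hβR hyε ha' hσR hσorth hσvals
        rw [add_sub_cancel_right] at hvals''
        refine ⟨d + 1, γ'', ?_, hR'', horth'', ?_⟩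
        · push_cast
          rw [hcount, inner_add_left, real_inner_comm ϖ₂ β, ha']
          ring
        · intro i
          rw [(hvals'' i).1, (hvals'' i).2]
          norm_num

end Master
end S7

/-- Let `R` be a simply laced root system, `ϖ₁, ϖ₂` minuscule weights,
`λᵢ ∈ W·ϖᵢ`, and set `d = d(λ₁,λ₂) = (ϖ₁,ϖ₂) - (λ₁,λ₂)` (a non-negative integer).  Then
there exists a sequence of roots `γ₁, …, γ_d` which are pairwise orthogonal and satisfy
`(λ₁,γᵢ)(λ₂,γᵢ) < 0` for all `i`. -/
theorem statement7 (R Rpos : Set E) (ϖ₁ ϖ₂ lam₁ lam₂ : E)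
    (hpos : R = Rpos ∪ (-Rpos))
    (hlen : ∀ α ∈ R, ⟪α, α⟫ = 2)
    (hneg : ∀ α ∈ R, -α ∈ R)
    (hrefl : ∀ α ∈ R, ∀ β ∈ R, rootReflection α β ∈ R)
    (hdom₁ : ∀ α ∈ Rpos, 0 ≤ ⟪ϖ₁, α⟫) (hdom₂ : ∀ α ∈ Rpos, 0 ≤ ⟪ϖ₂, α⟫)
    (hmin₁ : ∀ α ∈ R, ⟪ϖ₁, α⟫ ∈ ({-1, 0, 1} : Set ℝ))
    (hmin₂ : ∀ α ∈ R, ⟪ϖ₂, α⟫ ∈ ({-1, 0, 1} : Set ℝ))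
    (hlam₁ : lam₁ ∈ weylOrbit R ϖ₁) (hlam₂ : lam₂ ∈ weylOrbit R ϖ₂) :
    ∃ (d : ℕ) (γ : Fin d → E),
      (d : ℝ) = ⟪ϖ₁, ϖ₂⟫ - ⟪lam₁, lam₂⟫ ∧
      (∀ i, γ i ∈ R) ∧
      (∀ i j, i ≠ j → ⟪γ i, γ j⟫ = 0) ∧
      (∀ i, ⟪lam₁, γ i⟫ * ⟪lam₂, γ i⟫ < 0) := by
  obtain ⟨L₁, hL₁⟩ := S7.existsDec hlen hneg hrefl hmin₁ hlam₁
  obtain ⟨L₂, hL₂⟩ := S7.existsDec hlen hneg hrefl hmin₂ hlam₂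
  exact S7.master hpos hlen hneg hrefl hdom₁ hdom₂ hmin₁ hmin₂
    (L₁.length + L₂.length) lam₁ lam₂ L₁ L₂ hlam₁ hlam₂ hL₁ hL₂ le_rfl
end

section
/- Let $R$ be a simply laced root system, $\varpi_1,\varpi_2$ minuscule weights, and $\lambda_i \in W\cdot\varpi_i$. If $\gamma_1,\dots,\gamma_k$ are pairwise orthogonal roots with $(\lambda_1,\gamma_i)(\lambda_2,\gamma_i) < 0$ for all $i$, then $d(\lambda_1,\lambda_2) \geq k$. Consequently, $d(\lambda_1,\lambda_2)$ equals the maximal length of such a sequence of pairwise orthogonal roots. -/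
open scoped RealInnerProductSpace

variable {E : Type*} [NormedAddCommGroup E] [InnerProductSpace ℝ E]

lemma rr_adj (α x y : E) : ⟪rootReflection α x, y⟫ = ⟪x, rootReflection α y⟫ := by
  simp only [rootReflection, inner_sub_left, inner_sub_right, real_inner_smul_left,
    real_inner_smul_right]
  rw [real_inner_comm α y]
  ring

lemma rr_isom {α : E} (hα : ⟪α, α⟫ = 2) (x y : E) :
    ⟪rootReflection α x, rootReflection α y⟫ = ⟪x, y⟫ := by
  simp only [rootReflection, inner_sub_left, inner_sub_right, real_inner_smul_left,
    real_inner_smul_right]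
  rw [hα, real_inner_comm y α]
  ring

lemma rr_of_inner (α x : E) (c : ℝ) (h : ⟪x, α⟫ = c) : rootReflection α x = x - c • α := by
  rw [rootReflection, h]

section
variable {R : Set E} {ϖ : E}

lemma orbit_tail {lam : E} (h : lam ∈ weylOrbit R ϖ) {α : E} (hα : α ∈ R) :
    rootReflection α lam ∈ weylOrbit R ϖ :=
  Relation.ReflTransGen.tail h ⟨α, hα, rfl⟩

lemma min_orbit (hrefl : ∀ α ∈ R, ∀ β ∈ R, rootReflection α β ∈ R)
    (hmin : ∀ α ∈ R, ⟪ϖ, α⟫ ∈ ({-1,0,1} : Set ℝ)) :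
    ∀ lam ∈ weylOrbit R ϖ, ∀ α ∈ R, ⟪lam, α⟫ ∈ ({-1,0,1} : Set ℝ) := by
  intro lam h
  induction h with
  | refl => exact hmin
  | tail hsteps hstep ih =>
    obtain ⟨β, hβ, rfl⟩ := hstep
    intro α hα
    rw [rr_adj]
    exact ih _ (hrefl β hβ α hα)

def RChain (R : Set E) : E → List E → Prop
  | _, [] => True
  | μ, β :: L => β ∈ R ∧ ⟪μ, β⟫ = 1 ∧ RChain R (μ - β) L

@[simp] lemma rchain_nil (μ : E) : RChain R μ [] := trivial

@[simp] lemma rchain_cons {μ β : E} {L : List E} :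
    RChain R μ (β :: L) ↔ β ∈ R ∧ ⟪μ, β⟫ = 1 ∧ RChain R (μ - β) L := Iff.rfl

lemma rchain_append {A : List E} : ∀ {B : List E} {μ : E},
    RChain R μ (A ++ B) ↔ RChain R μ A ∧ RChain R (μ - A.sum) B := by
  induction A with
  | nil => intro B μ; simp
  | cons a A ih =>
    intro B μ
    simp only [List.cons_append, rchain_cons, ih, List.sum_cons, and_assoc, sub_sub]

lemma rchain_mem : ∀ {L : List E} {μ : E}, RChain R μ L → ∀ β ∈ L, β ∈ R := by
  intro L
  induction L with
  | nil => intro μ _ β hβ; simp at hβ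
  | cons a L ih =>
    intro μ h β hβ
    rcases List.mem_cons.1 hβ with rfl | hβ
    · exact h.1
    · exact ih h.2.2 β hβ

lemma rchain_orbit : ∀ {L : List E} {μ : E}, μ ∈ weylOrbit R ϖ → RChain R μ L →
    μ - L.sum ∈ weylOrbit R ϖ := by
  intro L
  induction L with
  | nil => intro μ h _; simpa using h
  | cons a L ih =>
    intro μ h hc
    have h1 : μ - a ∈ weylOrbit R ϖ := by
      have := orbit_tail h hc.1
      rwa [rr_of_inner a μ 1 hc.2.1, one_smul] at this
    have := ih h1 hc.2.2
    rwa [List.sum_cons, ← sub_sub]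

lemma orbit_rchain (hneg : ∀ α ∈ R, -α ∈ R)
    (hrefl : ∀ α ∈ R, ∀ β ∈ R, rootReflection α β ∈ R)
    (hmin : ∀ α ∈ R, ⟪ϖ, α⟫ ∈ ({-1,0,1} : Set ℝ)) {lam : E}
    (h : lam ∈ weylOrbit R ϖ) : ∃ L, RChain R ϖ L ∧ lam = ϖ - L.sum := by
  induction h with
  | refl => exact ⟨[], trivial, by simp⟩
  | tail hsteps hstep ih =>
    obtain ⟨L, hL, rfl⟩ := ih
    obtain ⟨α, hα, rfl⟩ := hstep
    have hc : ⟪ϖ - L.sum, α⟫ ∈ ({-1,0,1} : Set ℝ) := min_orbit hrefl hmin _ hsteps α hα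
    rcases hc with hc | hc | hc
    · refine ⟨L ++ [-α], ?_, ?_⟩
      · refine rchain_append.2 ⟨hL, ?_⟩
        exact ⟨hneg α hα, by rw [inner_neg_right, hc]; norm_num, trivial⟩
      · rw [rr_of_inner _ _ _ hc, List.sum_append]
        simp only [List.sum_cons, List.sum_nil, add_zero]
        module
    · refine ⟨L, hL, ?_⟩
      rw [rr_of_inner _ _ _ hc, zero_smul, sub_zero]
    · refine ⟨L ++ [α], ?_, ?_⟩
      · exact rchain_append.2 ⟨hL, hα, hc, trivial⟩
      · rw [rr_of_inner _ _ _ hc, List.sum_append]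
        simp only [List.sum_cons, List.sum_nil, add_zero, one_smul, sub_sub]

end

lemma inner_listsum_nonneg {x : E} : ∀ {L : List E}, (∀ β ∈ L, 0 ≤ ⟪x, β⟫) → 0 ≤ ⟪x, L.sum⟫ := by
  intro L
  induction L with
  | nil => intro _; simp
  | cons a L ih =>
    intro h
    rw [List.sum_cons, inner_add_right]
    have := ih fun β hβ => h β (List.mem_cons_of_mem a hβ)
    have := h a List.mem_cons_self
    linarith

lemma inner_listsum_nonpos {x : E} : ∀ {L : List E}, (∀ β ∈ L, ⟪x, β⟫ ≤ 0) → ⟪x, L.sum⟫ ≤ 0 := by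
  intro L
  induction L with
  | nil => intro _; simp
  | cons a L ih =>
    intro h
    rw [List.sum_cons, inner_add_right]
    have := ih fun β hβ => h β (List.mem_cons_of_mem a hβ)
    have := h a List.mem_cons_self
    linarith

section main
variable {R Rpos : Set E} {ϖ₁ ϖ₂ : E}

lemma mem_101 {x α : E} (h : ⟪x, α⟫ ∈ ({-1,0,1} : Set ℝ)) :
    ⟪x, α⟫ = -1 ∨ ⟪x, α⟫ = 0 ∨ ⟪x, α⟫ = 1 := by
  simpa [Set.mem_insert_iff, Set.mem_singleton_iff] using h

lemma step_cases (hlen : ∀ α ∈ R, ⟪α, α⟫ = 2)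
    (hrefl : ∀ α ∈ R, ∀ β ∈ R, rootReflection α β ∈ R)
    {ϖ : E} (hminw : ∀ α ∈ R, ⟪ϖ, α⟫ ∈ ({-1,0,1} : Set ℝ)) {μ a b : E}
    (hμ : μ ∈ weylOrbit R ϖ) (ha : a ∈ R) (hb : b ∈ R)
    (h1 : ⟪μ, a⟫ = 1) (h2 : ⟪μ - a, b⟫ = 1) :
    (⟪a,b⟫ = 0 ∧ ⟪μ,b⟫ = 1 ∧ ⟪μ - b, a⟫ = 1) ∨
    (⟪a,b⟫ = -1 ∧ a + b ∈ R ∧ ⟪μ, a + b⟫ = 1) ∨ b = -a := by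
  have e2 : ⟪μ - a, b⟫ = ⟪μ, b⟫ - ⟪a, b⟫ := inner_sub_left _ _ _
  have hab : ⟪μ,b⟫ = 1 + ⟪a,b⟫ := by linarith
  have hba : ⟪b,a⟫ = ⟪a,b⟫ := real_inner_comm a b
  rcases mem_101 (min_orbit hrefl hminw _ hμ b hb) with h | h | h
  · right; right
    have ht : ⟪a,b⟫ = -2 := by linarith
    have expand : ⟪a+b, a+b⟫ = ⟪a,a⟫ + ⟪a,b⟫ + ⟪b,a⟫ + ⟪b,b⟫ := by
      rw [inner_add_left, inner_add_right, inner_add_right]; ring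
    have hz : ⟪a+b, a+b⟫ = (0:ℝ) := by
      have := hlen a ha; have := hlen b hb; linarith
    exact eq_neg_of_add_eq_zero_right (inner_self_eq_zero.1 hz)
  · right; left
    have ht : ⟪a,b⟫ = -1 := by linarith
    refine ⟨ht, ?_, ?_⟩
    · have hR := hrefl b hb a ha
      rw [rr_of_inner b a (-1) (by linarith)] at hR
      rw [neg_one_smul, sub_neg_eq_add] at hR
      exact hR
    · rw [inner_add_right, h1, h]; norm_num
  · left
    have ht : ⟪a,b⟫ = 0 := by linarith
    have e3 : ⟪μ - b, a⟫ = ⟪μ, a⟫ - ⟪b, a⟫ := inner_sub_left _ _ _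
    exact ⟨ht, h, by linarith⟩

lemma bubble1_nil (hpos : R = Rpos ∪ (-Rpos))
    (hdom₁ : ∀ α ∈ Rpos, 0 ≤ ⟪ϖ₁, α⟫) (hdom₂ : ∀ α ∈ Rpos, 0 ≤ ⟪ϖ₂, α⟫)
    {β : E} (hβR : β ∈ R) (hβ1 : ⟪ϖ₁, β⟫ = 1) (hbad : ⟪ϖ₂, β⟫ < 0) : False := by
  rcases (hpos ▸ hβR : β ∈ Rpos ∪ (-Rpos)) with hm | hm
  · exact absurd (hdom₂ β hm) (by linarith)
  · have h := hdom₁ (-β) (Set.mem_neg.1 hm)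
    rw [inner_neg_right] at h
    linarith

lemma bubble1 (hpos : R = Rpos ∪ (-Rpos))
    (hlen : ∀ α ∈ R, ⟪α, α⟫ = 2)
    (hrefl : ∀ α ∈ R, ∀ β ∈ R, rootReflection α β ∈ R)
    (hdom₁ : ∀ α ∈ Rpos, 0 ≤ ⟪ϖ₁, α⟫) (hdom₂ : ∀ α ∈ Rpos, 0 ≤ ⟪ϖ₂, α⟫)
    (hmin₁ : ∀ α ∈ R, ⟪ϖ₁, α⟫ ∈ ({-1,0,1} : Set ℝ)) :
    ∀ (n : ℕ) (A : List E), A.length ≤ n → ∀ (B : List E) (β : E),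
    RChain R ϖ₁ (A ++ β :: B) → ⟪ϖ₂, β⟫ < 0 →
    ∃ L, RChain R ϖ₁ L ∧ L.sum = (A ++ β :: B).sum ∧ L.length < (A ++ β :: B).length := by
  intro n
  induction n with
  | zero =>
    intro A hA B β hch hbad
    have hA0 : A = [] := List.length_eq_zero_iff.1 (Nat.le_zero.1 hA)
    subst hA0
    rw [List.nil_append, rchain_cons] at hch
    exact absurd hbad (by have := bubble1_nil hpos hdom₁ hdom₂ hch.1 hch.2.1 hbad; exact this.elim)
  | succ n ih =>
    intro A hA B β hch hbad
    rcases List.eq_nil_or_concat A with rfl | ⟨A', a, rfl⟩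
    · rw [List.nil_append, rchain_cons] at hch
      exact (bubble1_nil hpos hdom₁ hdom₂ hch.1 hch.2.1 hbad).elim
    · rw [List.concat_eq_append] at hA hch ⊢
      have hA' : A'.length ≤ n := by
        simp only [List.length_append, List.length_cons, List.length_nil] at hA; omega
      have hch' : RChain R ϖ₁ (A' ++ a :: β :: B) := by
        rwa [List.append_assoc, List.singleton_append] at hch
      rw [rchain_append] at hch'
      obtain ⟨hC1, haR, hμa, hβR, hμaβ, hrest⟩ := hch'
      have hμorb : ϖ₁ - A'.sum ∈ weylOrbit R ϖ₁ :=
        rchain_orbit Relation.ReflTransGen.refl hC1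
      rcases step_cases hlen hrefl hmin₁ hμorb haR hβR hμa hμaβ with
        ⟨ht, hμb, hμba⟩ | ⟨ht, habR, hμab⟩ | rfl
      · -- swap and recurse
        have hch2 : RChain R ϖ₁ (A' ++ β :: a :: B) := by
          rw [rchain_append]
          exact ⟨hC1, hβR, hμb, haR, hμba, by rw [sub_right_comm]; exact hrest⟩
        obtain ⟨L, hL, hsum, hlt⟩ := ih A' hA' (a :: B) β hch2 hbad
        refine ⟨L, hL, ?_, ?_⟩
        · rw [hsum]; simp only [List.sum_append, List.sum_cons, List.sum_nil]; abel
        · have : (A' ++ β :: a :: B).length = ((A' ++ [a]) ++ β :: B).length := by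
            simp only [List.length_append, List.length_cons, List.length_nil]; omega
          omega
      · -- merge
        refine ⟨A' ++ (a + β) :: B, ?_, ?_, ?_⟩
        · rw [rchain_append]
          exact ⟨hC1, habR, hμab, by rw [sub_add_eq_sub_sub]; exact hrest⟩
        · simp only [List.sum_append, List.sum_cons, List.sum_nil]; abel
        · simp only [List.length_append, List.length_cons, List.length_nil]; omega
      · -- cancel
        refine ⟨A' ++ B, ?_, ?_, ?_⟩
        · rw [rchain_append]
          refine ⟨hC1, ?_⟩
          have : ϖ₁ - A'.sum - a - (-a) = ϖ₁ - A'.sum := by abel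
          rwa [this] at hrest
        · simp only [List.sum_append, List.sum_cons, List.sum_nil]; abel
        · simp only [List.length_append, List.length_cons, List.length_nil]; omega

lemma core1 (hpos : R = Rpos ∪ (-Rpos))
    (hlen : ∀ α ∈ R, ⟪α, α⟫ = 2)
    (hrefl : ∀ α ∈ R, ∀ β ∈ R, rootReflection α β ∈ R)
    (hdom₁ : ∀ α ∈ Rpos, 0 ≤ ⟪ϖ₁, α⟫) (hdom₂ : ∀ α ∈ Rpos, 0 ≤ ⟪ϖ₂, α⟫)
    (hmin₁ : ∀ α ∈ R, ⟪ϖ₁, α⟫ ∈ ({-1,0,1} : Set ℝ)) :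
    ∀ (n : ℕ) (L : List E), L.length ≤ n → RChain R ϖ₁ L → 0 ≤ ⟪ϖ₂, L.sum⟫ := by
  intro n
  induction n with
  | zero =>
    intro L hL _
    have : L = [] := List.length_eq_zero_iff.1 (Nat.le_zero.1 hL)
    subst this; simp
  | succ n ih =>
    intro L hL hch
    by_cases hall : ∀ β ∈ L, 0 ≤ ⟪ϖ₂, β⟫
    · exact inner_listsum_nonneg hall
    · push_neg at hall
      obtain ⟨β, hβL, hβbad⟩ := hall
      obtain ⟨A, B, rfl⟩ := List.append_of_mem hβL
      obtain ⟨L', hL', hsum, hlt⟩ :=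
        bubble1 hpos hlen hrefl hdom₁ hdom₂ hmin₁ A.length A le_rfl B β hch hβbad
      have := ih L' (by omega) hL'
      rwa [hsum] at this
end main

section main
variable {R Rpos : Set E} {ϖ₁ ϖ₂ : E}

lemma bubble2 (hlen : ∀ α ∈ R, ⟪α, α⟫ = 2)
    (hrefl : ∀ α ∈ R, ∀ β ∈ R, rootReflection α β ∈ R)
    (hmin₂ : ∀ α ∈ R, ⟪ϖ₂, α⟫ ∈ ({-1,0,1} : Set ℝ)) :
    ∀ (B A : List E) (γ : E), RChain R ϖ₂ (A ++ γ :: B) → ⟪ϖ₁, γ⟫ = 1 →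
    (∃ L' γ', RChain R ϖ₂ (L' ++ [γ']) ∧ (L' ++ [γ']).sum = (A ++ γ :: B).sum ∧ ⟪ϖ₁, γ'⟫ = 1)
    ∨ (∃ L, RChain R ϖ₂ L ∧ L.sum = (A ++ γ :: B).sum ∧ L.length < (A ++ γ :: B).length) := by
  intro B
  induction B with
  | nil => intro A γ hch hγ; exact Or.inl ⟨A, γ, hch, rfl, hγ⟩
  | cons b B' ih =>
    intro A γ hch hγ
    rw [rchain_append] at hch
    obtain ⟨hA, hγR, hμγ, hbR, hμγb, hrest⟩ := hch
    have hμorb : ϖ₂ - A.sum ∈ weylOrbit R ϖ₂ := rchain_orbit Relation.ReflTransGen.refl hA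
    rcases step_cases hlen hrefl hmin₂ hμorb hγR hbR hμγ hμγb with
      ⟨ht, hμb, hμba⟩ | ⟨ht, habR, hμab⟩ | rfl
    · -- swap, recurse with A ++ [b]
      have hch2 : RChain R ϖ₂ ((A ++ [b]) ++ γ :: B') := by
        rw [List.append_assoc, List.singleton_append, rchain_append]
        exact ⟨hA, hbR, hμb, hγR, hμba, by rw [sub_right_comm]; exact hrest⟩
      rcases ih (A ++ [b]) γ hch2 hγ with ⟨L', γ', h1, h2, h3⟩ | ⟨L, h1, h2, h3⟩
      · left
        refine ⟨L', γ', h1, ?_, h3⟩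
        rw [h2]; simp only [List.sum_append, List.sum_cons, List.sum_nil]; abel
      · right
        refine ⟨L, h1, ?_, ?_⟩
        · rw [h2]; simp only [List.sum_append, List.sum_cons, List.sum_nil]; abel
        · have : ((A ++ [b]) ++ γ :: B').length = (A ++ γ :: b :: B').length := by
            simp only [List.length_append, List.length_cons, List.length_nil]; omega
          omega
    · -- merge
      right
      refine ⟨A ++ (γ + b) :: B', ?_, ?_, ?_⟩
      · rw [rchain_append]
        exact ⟨hA, habR, hμab, by rw [sub_add_eq_sub_sub]; exact hrest⟩
      · simp only [List.sum_append, List.sum_cons, List.sum_nil]; abel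
      · simp only [List.length_append, List.length_cons, List.length_nil]; omega
    · -- cancel
      right
      refine ⟨A ++ B', ?_, ?_, ?_⟩
      · rw [rchain_append]
        refine ⟨hA, ?_⟩
        have : ϖ₂ - A.sum - γ - -γ = ϖ₂ - A.sum := by abel
        rwa [this] at hrest
      · simp only [List.sum_append, List.sum_cons, List.sum_nil]; abel
      · simp only [List.length_append, List.length_cons, List.length_nil]; omega

lemma core2 (hlen : ∀ α ∈ R, ⟪α, α⟫ = 2)
    (hrefl : ∀ α ∈ R, ∀ β ∈ R, rootReflection α β ∈ R)
    (hmin₁ : ∀ α ∈ R, ⟪ϖ₁, α⟫ ∈ ({-1,0,1} : Set ℝ))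
    (hmin₂ : ∀ α ∈ R, ⟪ϖ₂, α⟫ ∈ ({-1,0,1} : Set ℝ)) :
    ∀ (n : ℕ) (L : List E), L.length ≤ n → RChain R ϖ₂ L → 1 ≤ ⟪ϖ₁, L.sum⟫ →
    ∃ L' γ, RChain R ϖ₂ (L' ++ [γ]) ∧ (L' ++ [γ]).sum = L.sum ∧ ⟪ϖ₁, γ⟫ = 1 := by
  intro n
  induction n with
  | zero =>
    intro L hL _ hsum
    have : L = [] := List.length_eq_zero_iff.1 (Nat.le_zero.1 hL)
    subst this
    rw [List.sum_nil, inner_zero_right] at hsum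
    linarith
  | succ n ih =>
    intro L hL hch hsum
    by_cases hex : ∃ γ ∈ L, ⟪ϖ₁, γ⟫ = 1
    · obtain ⟨γ, hγL, hγ1⟩ := hex
      obtain ⟨A, B, rfl⟩ := List.append_of_mem hγL
      rcases bubble2 hlen hrefl hmin₂ B A γ hch hγ1 with ⟨L', γ', h1, h2, h3⟩ | ⟨L', h1, h2, h3⟩
      · exact ⟨L', γ', h1, h2, h3⟩
      · have := ih L' (by omega) h1 (by rw [h2]; exact hsum)
        obtain ⟨L'', γ'', g1, g2, g3⟩ := this
        exact ⟨L'', γ'', g1, by rw [g2, h2], g3⟩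
    · push_neg at hex
      exfalso
      have hle : ∀ β ∈ L, ⟪ϖ₁, β⟫ ≤ 0 := by
        intro β hβ
        rcases mem_101 (hmin₁ β (rchain_mem hch β hβ)) with h | h | h
        · linarith
        · linarith
        · exact absurd h (hex β hβ)
      have := inner_listsum_nonpos hle
      linarith
end main

section main
variable {R Rpos : Set E} {ϖ₁ ϖ₂ : E}

lemma exists_int_of_101 {x : ℝ} (h : x = -1 ∨ x = 0 ∨ x = 1) : ∃ n : ℤ, x = n := by
  rcases h with h | h | h
  · exact ⟨-1, by rw [h]; norm_num⟩
  · exact ⟨0, by rw [h]; norm_num⟩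
  · exact ⟨1, by rw [h]; norm_num⟩

lemma lemmaL0 (hpos : R = Rpos ∪ (-Rpos))
    (hlen : ∀ α ∈ R, ⟪α, α⟫ = 2)
    (hneg : ∀ α ∈ R, -α ∈ R)
    (hrefl : ∀ α ∈ R, ∀ β ∈ R, rootReflection α β ∈ R)
    (hdom₁ : ∀ α ∈ Rpos, 0 ≤ ⟪ϖ₁, α⟫) (hdom₂ : ∀ α ∈ Rpos, 0 ≤ ⟪ϖ₂, α⟫)
    (hmin₁ : ∀ α ∈ R, ⟪ϖ₁, α⟫ ∈ ({-1,0,1} : Set ℝ))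
    {lam₁ : E} (h : lam₁ ∈ weylOrbit R ϖ₁) : ⟪lam₁, ϖ₂⟫ ≤ ⟪ϖ₁, ϖ₂⟫ := by
  obtain ⟨L, hL, rfl⟩ := orbit_rchain hneg hrefl hmin₁ h
  have h0 := core1 hpos hlen hrefl hdom₁ hdom₂ hmin₁ L.length L le_rfl hL
  have e : ⟪ϖ₁ - L.sum, ϖ₂⟫ = ⟪ϖ₁, ϖ₂⟫ - ⟪L.sum, ϖ₂⟫ := inner_sub_left _ _ _
  have e2 : ⟪L.sum, ϖ₂⟫ = ⟪ϖ₂, L.sum⟫ := real_inner_comm _ _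
  linarith

lemma lemmaL (hpos : R = Rpos ∪ (-Rpos))
    (hlen : ∀ α ∈ R, ⟪α, α⟫ = 2)
    (hneg : ∀ α ∈ R, -α ∈ R)
    (hrefl : ∀ α ∈ R, ∀ β ∈ R, rootReflection α β ∈ R)
    (hdom₁ : ∀ α ∈ Rpos, 0 ≤ ⟪ϖ₁, α⟫) (hdom₂ : ∀ α ∈ Rpos, 0 ≤ ⟪ϖ₂, α⟫)
    (hmin₁ : ∀ α ∈ R, ⟪ϖ₁, α⟫ ∈ ({-1,0,1} : Set ℝ))
    {lam₂ : E} (h₂ : lam₂ ∈ weylOrbit R ϖ₂) :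
    ∀ lam₁ ∈ weylOrbit R ϖ₁, ⟪lam₁, lam₂⟫ ≤ ⟪ϖ₁, ϖ₂⟫ := by
  induction h₂ with
  | refl =>
    intro lam₁ h₁
    exact lemmaL0 hpos hlen hneg hrefl hdom₁ hdom₂ hmin₁ h₁
  | tail hsteps hstep ih =>
    obtain ⟨α, hα, rfl⟩ := hstep
    intro lam₁ h₁
    rw [← rr_adj]
    exact ih _ (orbit_tail h₁ hα)

lemma lemmaM (hlen : ∀ α ∈ R, ⟪α, α⟫ = 2)
    (hneg : ∀ α ∈ R, -α ∈ R)
    (hrefl : ∀ α ∈ R, ∀ β ∈ R, rootReflection α β ∈ R)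
    (hmin₁ : ∀ α ∈ R, ⟪ϖ₁, α⟫ ∈ ({-1,0,1} : Set ℝ))
    (hmin₂ : ∀ α ∈ R, ⟪ϖ₂, α⟫ ∈ ({-1,0,1} : Set ℝ))
    {lam₁ : E} (h₁ : lam₁ ∈ weylOrbit R ϖ₁) :
    ∀ lam₂ ∈ weylOrbit R ϖ₂, ⟪lam₁, lam₂⟫ + 1 ≤ ⟪ϖ₁, ϖ₂⟫ →
    ∃ γ ∈ R, ⟪lam₁, γ⟫ = 1 ∧ ⟪lam₂, γ⟫ = -1 := by
  induction h₁ with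
  | refl =>
    intro lam₂ h₂ hlt
    obtain ⟨L, hL, rfl⟩ := orbit_rchain hneg hrefl hmin₂ h₂
    have egap : ⟪ϖ₁, ϖ₂ - L.sum⟫ = ⟪ϖ₁, ϖ₂⟫ - ⟪ϖ₁, L.sum⟫ := inner_sub_right _ _ _
    have h1 : 1 ≤ ⟪ϖ₁, L.sum⟫ := by linarith
    obtain ⟨L', γ, hch, hsum, hγ1⟩ := core2 hlen hrefl hmin₁ hmin₂ L.length L le_rfl hL h1
    have hγR : γ ∈ R := rchain_mem hch γ (by simp)
    refine ⟨γ, hγR, hγ1, ?_⟩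
    rw [rchain_append] at hch
    obtain ⟨-, -, hinner, -⟩ := hch
    have hsum' : L.sum = L'.sum + γ := by
      rw [← hsum]; simp [List.sum_append]
    have e : ⟪ϖ₂ - L.sum, γ⟫ = ⟪ϖ₂ - L'.sum, γ⟫ - ⟪γ, γ⟫ := by
      rw [hsum', inner_sub_left, inner_sub_left, inner_add_left]; ring
    rw [e, hinner, hlen γ hγR]; norm_num
  | @tail μ₁ lam₁ hsteps hstep ih =>
    obtain ⟨α, hα, rfl⟩ := hstep
    intro lam₂ h₂ hlt
    have h₂' : rootReflection α lam₂ ∈ weylOrbit R ϖ₂ := orbit_tail h₂ hα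
    have hlt2 : ⟪μ₁, rootReflection α lam₂⟫ + 1 ≤ ⟪ϖ₁, ϖ₂⟫ := by
      rw [← rr_adj]; exact hlt
    obtain ⟨γ, hγR, hγ1, hγ2⟩ := ih _ h₂' hlt2
    refine ⟨rootReflection α γ, hrefl α hα γ hγR, ?_, ?_⟩
    · rw [rr_isom (hlen α hα)]; exact hγ1
    · rw [← rr_adj]; exact hγ2

lemma int1 (hrefl : ∀ α ∈ R, ∀ β ∈ R, rootReflection α β ∈ R)
    (hmin₁ : ∀ α ∈ R, ⟪ϖ₁, α⟫ ∈ ({-1,0,1} : Set ℝ))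
    (hmin₂ : ∀ α ∈ R, ⟪ϖ₂, α⟫ ∈ ({-1,0,1} : Set ℝ))
    {lam₁ : E} (h₁ : lam₁ ∈ weylOrbit R ϖ₁) :
    ∃ z : ℤ, ⟪lam₁, ϖ₂⟫ = ⟪ϖ₁, ϖ₂⟫ + z := by
  induction h₁ with
  | refl => exact ⟨0, by norm_num⟩
  | @tail μ₁ lam₁ hsteps hstep ih =>
    obtain ⟨z, hz⟩ := ih
    obtain ⟨α, hα, rfl⟩ := hstep
    obtain ⟨m, hm⟩ := exists_int_of_101 (mem_101 (min_orbit hrefl hmin₁ _ hsteps α hα))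
    obtain ⟨k, hk⟩ := exists_int_of_101 (mem_101 (hmin₂ α hα))
    refine ⟨z - m * k, ?_⟩
    have e : ⟪rootReflection α μ₁, ϖ₂⟫ = ⟪μ₁, ϖ₂⟫ - ⟪μ₁, α⟫ * ⟪α, ϖ₂⟫ := by
      rw [rootReflection, inner_sub_left, real_inner_smul_left]
    have hcomm : ⟪α, ϖ₂⟫ = ⟪ϖ₂, α⟫ := real_inner_comm _ _
    rw [e, hcomm, hz, hm, hk]; push_cast; ring

lemma int2 (hrefl : ∀ α ∈ R, ∀ β ∈ R, rootReflection α β ∈ R)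
    (hmin₁ : ∀ α ∈ R, ⟪ϖ₁, α⟫ ∈ ({-1,0,1} : Set ℝ))
    (hmin₂ : ∀ α ∈ R, ⟪ϖ₂, α⟫ ∈ ({-1,0,1} : Set ℝ))
    {lam₁ : E} (h₁ : lam₁ ∈ weylOrbit R ϖ₁)
    {lam₂ : E} (h₂ : lam₂ ∈ weylOrbit R ϖ₂) :
    ∃ z : ℤ, ⟪lam₁, lam₂⟫ = ⟪lam₁, ϖ₂⟫ + z := by
  induction h₂ with
  | refl => exact ⟨0, by norm_num⟩
  | @tail μ₂ lam₂ hsteps hstep ih =>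
    obtain ⟨z, hz⟩ := ih
    obtain ⟨α, hα, rfl⟩ := hstep
    obtain ⟨m, hm⟩ := exists_int_of_101 (mem_101 (min_orbit hrefl hmin₂ _ hsteps α hα))
    obtain ⟨k, hk⟩ := exists_int_of_101 (mem_101 (min_orbit hrefl hmin₁ _ h₁ α hα))
    refine ⟨z - m * k, ?_⟩
    have e : ⟪lam₁, rootReflection α μ₂⟫ = ⟪lam₁, μ₂⟫ - ⟪μ₂, α⟫ * ⟪lam₁, α⟫ := by
      rw [rootReflection, inner_sub_right, real_inner_smul_right]
    rw [e, hz, hm, hk]; push_cast; ring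
end main

section main
variable {R Rpos : Set E} {ϖ₁ ϖ₂ : E}

lemma refl_add_of_inner {lam γ : E} (h : ⟪lam, γ⟫ = -1) : rootReflection γ lam = lam + γ := by
  rw [rr_of_inner γ lam (-1) h, neg_one_smul, sub_neg_eq_add]

lemma lemmaB (hlen : ∀ α ∈ R, ⟪α, α⟫ = 2)
    (hneg : ∀ α ∈ R, -α ∈ R)
    (hrefl : ∀ α ∈ R, ∀ β ∈ R, rootReflection α β ∈ R)
    (hmin₁ : ∀ α ∈ R, ⟪ϖ₁, α⟫ ∈ ({-1,0,1} : Set ℝ))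
    (hmin₂ : ∀ α ∈ R, ⟪ϖ₂, α⟫ ∈ ({-1,0,1} : Set ℝ)) :
    ∀ (d : ℕ) {lam₁ lam₂ : E}, lam₁ ∈ weylOrbit R ϖ₁ → lam₂ ∈ weylOrbit R ϖ₂ →
    ⟪lam₁, lam₂⟫ = ⟪ϖ₁, ϖ₂⟫ - d →
    ∃ γ : Fin d → E, (∀ i, γ i ∈ R) ∧ (∀ i j, i ≠ j → ⟪γ i, γ j⟫ = 0) ∧
      (∀ i, ⟪lam₁, γ i⟫ = 1 ∧ ⟪lam₂, γ i⟫ = -1) := by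
  intro d
  induction d with
  | zero =>
    intro lam₁ lam₂ _ _ _
    exact ⟨Fin.elim0, fun i => i.elim0, fun i => i.elim0, fun i => i.elim0⟩
  | succ d ih =>
    intro lam₁ lam₂ h₁ h₂ hgap
    have hlt : ⟪lam₁, lam₂⟫ + 1 ≤ ⟪ϖ₁, ϖ₂⟫ := by
      rw [hgap]; push_cast; linarith
    obtain ⟨γ₀, hγ₀R, hg1, hg2⟩ := lemmaM hlen hneg hrefl hmin₁ hmin₂ h₁ lam₂ h₂ hlt
    have h₂' : lam₂ + γ₀ ∈ weylOrbit R ϖ₂ := refl_add_of_inner hg2 ▸ orbit_tail h₂ hγ₀R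
    have hgap' : ⟪lam₁, lam₂ + γ₀⟫ = ⟪ϖ₁, ϖ₂⟫ - d := by
      rw [inner_add_right, hgap, hg1]; push_cast; ring
    obtain ⟨γ, hR, horth, hP⟩ := ih h₁ h₂' hgap'
    have key : ∀ j, ⟪γ₀, γ j⟫ = 0 ∧ ⟪lam₂, γ j⟫ = -1 := by
      intro j
      have hj2 : ⟪lam₂ + γ₀, γ j⟫ = -1 := (hP j).2
      have hj1 : ⟪lam₁, γ j⟫ = 1 := (hP j).1
      have e : ⟪lam₂, γ j⟫ = -1 - ⟪γ₀, γ j⟫ := by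
        rw [inner_add_left] at hj2; linarith
      rcases mem_101 (min_orbit hrefl hmin₂ lam₂ h₂ (γ j) (hR j)) with h | h | h
      · exact ⟨by linarith, h⟩
      · exfalso
        have hc : ⟪γ₀, γ j⟫ = -1 := by linarith
        have hroot : γ₀ + γ j ∈ R := by
          have hh := hrefl (γ j) (hR j) γ₀ hγ₀R
          rwa [rr_of_inner (γ j) γ₀ (-1) hc, neg_one_smul, sub_neg_eq_add] at hh
        have e2 : ⟪lam₁, γ₀ + γ j⟫ = 2 := by
          rw [inner_add_right, hg1, hj1]; norm_num
        rcases mem_101 (min_orbit hrefl hmin₁ lam₁ h₁ _ hroot) with h' | h' | h' <;> linarith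
      · exfalso
        have hc : ⟪γ₀, γ j⟫ = -2 := by linarith
        have expand : ⟪γ₀ + γ j, γ₀ + γ j⟫ = ⟪γ₀,γ₀⟫ + ⟪γ₀, γ j⟫ + ⟪γ j, γ₀⟫ + ⟪γ j, γ j⟫ := by
          rw [inner_add_left, inner_add_right, inner_add_right]; ring
        have hba : ⟪γ j, γ₀⟫ = ⟪γ₀, γ j⟫ := real_inner_comm _ _
        have hz : ⟪γ₀ + γ j, γ₀ + γ j⟫ = (0:ℝ) := by
          have := hlen γ₀ hγ₀R; have := hlen (γ j) (hR j); linarith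
        have h0 : γ j = -γ₀ := eq_neg_of_add_eq_zero_right (inner_self_eq_zero.1 hz)
        rw [h0, inner_neg_right, hg1] at hj1
        linarith
    refine ⟨Fin.cons γ₀ γ, ?_, ?_, ?_⟩
    · intro i
      rcases Fin.eq_zero_or_eq_succ i with rfl | ⟨i', rfl⟩
      · simpa using hγ₀R
      · simpa using hR i'
    · intro i j hij
      rcases Fin.eq_zero_or_eq_succ i with rfl | ⟨i', rfl⟩ <;>
        rcases Fin.eq_zero_or_eq_succ j with rfl | ⟨j', rfl⟩
      · exact absurd rfl hij
      · simpa using (key j').1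
      · have := (key i').1
        have hcomm : ⟪γ i', γ₀⟫ = ⟪γ₀, γ i'⟫ := real_inner_comm _ _
        simp only [Fin.cons_succ, Fin.cons_zero]
        linarith
      · have hne : i' ≠ j' := fun hh => hij (by rw [hh])
        simpa using horth i' j' hne
    · intro i
      rcases Fin.eq_zero_or_eq_succ i with rfl | ⟨i', rfl⟩
      · simpa using ⟨hg1, hg2⟩
      · simp only [Fin.cons_succ]
        exact ⟨(hP i').1, (key i').2⟩

lemma lemmaA (hpos : R = Rpos ∪ (-Rpos))
    (hlen : ∀ α ∈ R, ⟪α, α⟫ = 2)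
    (hneg : ∀ α ∈ R, -α ∈ R)
    (hrefl : ∀ α ∈ R, ∀ β ∈ R, rootReflection α β ∈ R)
    (hdom₁ : ∀ α ∈ Rpos, 0 ≤ ⟪ϖ₁, α⟫) (hdom₂ : ∀ α ∈ Rpos, 0 ≤ ⟪ϖ₂, α⟫)
    (hmin₁ : ∀ α ∈ R, ⟪ϖ₁, α⟫ ∈ ({-1,0,1} : Set ℝ)) :
    ∀ (k : ℕ) {lam₁ lam₂ : E}, lam₁ ∈ weylOrbit R ϖ₁ → lam₂ ∈ weylOrbit R ϖ₂ →
    ∀ γ : Fin k → E, (∀ i, γ i ∈ R) → (∀ i j, i ≠ j → ⟪γ i, γ j⟫ = 0) →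
    (∀ i, ⟪lam₁, γ i⟫ = 1 ∧ ⟪lam₂, γ i⟫ = -1) →
    (k : ℝ) ≤ ⟪ϖ₁, ϖ₂⟫ - ⟪lam₁, lam₂⟫ := by
  intro k
  induction k with
  | zero =>
    intro lam₁ lam₂ h₁ h₂ γ _ _ _
    have := lemmaL hpos hlen hneg hrefl hdom₁ hdom₂ hmin₁ h₂ lam₁ h₁
    push_cast; linarith
  | succ k ih =>
    intro lam₁ lam₂ h₁ h₂ γ hR horth hP
    have h₂' : lam₂ + γ 0 ∈ weylOrbit R ϖ₂ := refl_add_of_inner (hP 0).2 ▸ orbit_tail h₂ (hR 0)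
    have step := ih h₁ h₂' (fun j => γ j.succ) (fun j => hR j.succ)
      (fun i j hij => horth i.succ j.succ (fun hh => hij (Fin.succ_injective _ hh)))
      (fun j => ⟨(hP j.succ).1, by
        rw [inner_add_left, (hP j.succ).2, horth 0 j.succ (Fin.succ_ne_zero j).symm]
        norm_num⟩)
    have e : ⟪lam₁, lam₂ + γ 0⟫ = ⟪lam₁, lam₂⟫ + 1 := by
      rw [inner_add_right, (hP 0).1]
    rw [e] at step
    push_cast
    linarith
end main


/-- Let `R` be a simply laced root system, `ϖ₁, ϖ₂` minuscule weights, and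
`λᵢ ∈ W·ϖᵢ`, with `d(λ₁,λ₂) = (ϖ₁,ϖ₂) - (λ₁,λ₂)`.  If `γ₁, …, γ_k` are pairwise orthogonal
roots with `(λ₁,γᵢ)(λ₂,γᵢ) < 0` for all `i`, then `d(λ₁,λ₂) ≥ k`.  Consequently `d(λ₁,λ₂)`
equals the maximal length of such a sequence of pairwise orthogonal roots (witnessed by a
sequence of length exactly `d(λ₁,λ₂)`). -/
theorem statement8 (R Rpos : Set E) (ϖ₁ ϖ₂ lam₁ lam₂ : E)
    (hpos : R = Rpos ∪ (-Rpos))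
    (hlen : ∀ α ∈ R, ⟪α, α⟫ = 2)
    (hneg : ∀ α ∈ R, -α ∈ R)
    (hrefl : ∀ α ∈ R, ∀ β ∈ R, rootReflection α β ∈ R)
    (hdom₁ : ∀ α ∈ Rpos, 0 ≤ ⟪ϖ₁, α⟫) (hdom₂ : ∀ α ∈ Rpos, 0 ≤ ⟪ϖ₂, α⟫)
    (hmin₁ : ∀ α ∈ R, ⟪ϖ₁, α⟫ ∈ ({-1, 0, 1} : Set ℝ))
    (hmin₂ : ∀ α ∈ R, ⟪ϖ₂, α⟫ ∈ ({-1, 0, 1} : Set ℝ))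
    (hlam₁ : lam₁ ∈ weylOrbit R ϖ₁) (hlam₂ : lam₂ ∈ weylOrbit R ϖ₂) :
    (∀ (k : ℕ) (γ : Fin k → E),
        (∀ i, γ i ∈ R) →
        (∀ i j, i ≠ j → ⟪γ i, γ j⟫ = 0) →
        (∀ i, ⟪lam₁, γ i⟫ * ⟪lam₂, γ i⟫ < 0) →
        (k : ℝ) ≤ ⟪ϖ₁, ϖ₂⟫ - ⟪lam₁, lam₂⟫) ∧
    (∃ (d : ℕ) (γ : Fin d → E),
        (d : ℝ) = ⟪ϖ₁, ϖ₂⟫ - ⟪lam₁, lam₂⟫ ∧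
        (∀ i, γ i ∈ R) ∧
        (∀ i j, i ≠ j → ⟪γ i, γ j⟫ = 0) ∧
        (∀ i, ⟪lam₁, γ i⟫ * ⟪lam₂, γ i⟫ < 0)) := by
  constructor
  · intro k γ hγR horth hprod
    classical
    have hval : ∀ i, (⟪lam₁, γ i⟫ = 1 ∧ ⟪lam₂, γ i⟫ = -1) ∨
        (⟪lam₁, γ i⟫ = -1 ∧ ⟪lam₂, γ i⟫ = 1) := by
      intro i
      have hp := hprod i
      rcases mem_101 (min_orbit hrefl hmin₁ lam₁ hlam₁ _ (hγR i)) with h1 | h1 | h1 <;>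
        rcases mem_101 (min_orbit hrefl hmin₂ lam₂ hlam₂ _ (hγR i)) with h2 | h2 | h2 <;>
        rw [h1, h2] at hp <;> norm_num at hp
      · exact Or.inr ⟨h1, h2⟩
      · exact Or.inl ⟨h1, h2⟩
    set γ' : Fin k → E := fun i => if ⟪lam₂, γ i⟫ = -1 then γ i else -(γ i) with hγ'
    have hR' : ∀ i, γ' i ∈ R := by
      intro i
      simp only [hγ']
      split
      · exact hγR i
      · exact hneg _ (hγR i)
    have horth' : ∀ i j, i ≠ j → ⟪γ' i, γ' j⟫ = 0 := by
      intro i j hij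
      simp only [hγ']
      split <;> split <;>
        simp [inner_neg_left, inner_neg_right, horth i j hij]
    have hP' : ∀ i, ⟪lam₁, γ' i⟫ = 1 ∧ ⟪lam₂, γ' i⟫ = -1 := by
      intro i
      rcases hval i with ⟨h1, h2⟩ | ⟨h1, h2⟩
      · simp only [hγ', if_pos h2]
        exact ⟨h1, h2⟩
      · have hne : ¬ (⟪lam₂, γ i⟫ = -1) := by rw [h2]; norm_num
        simp only [hγ', if_neg hne, inner_neg_right, h1, h2]
        norm_num
    exact lemmaA hpos hlen hneg hrefl hdom₁ hdom₂ hmin₁ k hlam₁ hlam₂ γ' hR' horth' hP'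
  · obtain ⟨z1, hz1⟩ := int1 hrefl hmin₁ hmin₂ hlam₁
    obtain ⟨z2, hz2⟩ := int2 hrefl hmin₁ hmin₂ hlam₁ hlam₂
    have hgapint : ⟪lam₁, lam₂⟫ = ⟪ϖ₁, ϖ₂⟫ + ((z1 + z2 : ℤ) : ℝ) := by
      rw [hz2, hz1]; push_cast; ring
    have hge : ⟪lam₁, lam₂⟫ ≤ ⟪ϖ₁, ϖ₂⟫ :=
      lemmaL hpos hlen hneg hrefl hdom₁ hdom₂ hmin₁ hlam₂ lam₁ hlam₁
    have hzneg : z1 + z2 ≤ 0 := by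
      by_contra hcon
      push_neg at hcon
      have : (1 : ℝ) ≤ ((z1 + z2 : ℤ) : ℝ) := by exact_mod_cast hcon
      linarith
    set d := (-(z1 + z2)).toNat with hd
    have hdz : ((d : ℤ) : ℝ) = -((z1 + z2 : ℤ) : ℝ) := by
      have : (d : ℤ) = -(z1 + z2) := Int.toNat_of_nonneg (by omega)
      rw [this]; push_cast; ring
    have hdr : (d : ℝ) = ⟪ϖ₁, ϖ₂⟫ - ⟪lam₁, lam₂⟫ := by
      rw [hgapint]
      have : ((d : ℤ) : ℝ) = (d : ℝ) := by push_cast; ring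
      linarith [hdz, this]
    obtain ⟨γ, hR, horth, hP⟩ := lemmaB hlen hneg hrefl hmin₁ hmin₂ d hlam₁ hlam₂
      (by linarith [hdr])
    refine ⟨d, γ, hdr, hR, horth, fun i => ?_⟩
    rw [(hP i).1, (hP i).2]
    norm_num
end
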